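/- arXiv:1305.4546 — 8 statements merged into one kernel-verified Lean document; each statement's English description precedes it below -/
import Mathlib

section
/- Every nonempty word w over a linearly ordered alphabet can be written uniquely as a concatenation w = c₁c₂⋯cₙ of associative Lyndon-Shirshov words with c₁ ≤ c₂ ≤ ⋯ ≤ cₙ in the lexicographic order. -/
/-- The lexicographic order used for Lyndon–Shirshov words: the empty word is
greater than any nonempty word, and otherwise words are compared letterwise. -/
def lexGT {X : Type*} [LinearOrder X] : List X → List X → Prop
  | _, [] => False
  | [], _ :: _ => True
  | a :: u, b :: v => b < a ∨ (a = b ∧ lexGT u v)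

/-- `w` is an associative Lyndon–Shirshov word: it is nonempty and greater
than each of its nontrivial rotations. -/
def IsALSW {X : Type*} [LinearOrder X] (w : List X) : Prop :=
  w ≠ [] ∧ ∀ u v : List X, u ≠ [] → v ≠ [] → w = u ++ v → lexGT w (v ++ u)

namespace CFLaux

variable {X : Type*} [LinearOrder X]

/- We read `lexGT u v` as "`u` is less than `v`" for the dual alphabet order;
under this reading `IsALSW` is the classical notion of Lyndon word. -/

lemma not_gt_nil (u : List X) : ¬ lexGT u [] := by
  cases u <;> exact fun h => h

lemma irrefl (u : List X) : ¬ lexGT u u := by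
  induction u with
  | nil => exact fun h => h
  | cons a u ih =>
    rintro (h | ⟨-, h⟩)
    · exact absurd h (lt_irrefl a)
    · exact ih h

lemma trans : ∀ {u v w : List X}, lexGT u v → lexGT v w → lexGT u w := by
  intro u v w h1 h2
  induction u generalizing v w with
  | nil =>
    cases w with
    | nil => exact absurd h2 (not_gt_nil v)
    | cons d w => trivial
  | cons a u ih =>
    cases v with
    | nil => exact absurd h1 (not_gt_nil _)
    | cons c v =>
      cases w with
      | nil => exact absurd h2 (not_gt_nil _)
      | cons d w =>
        rcases h1 with h1 | ⟨rfl, h1⟩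
        · rcases h2 with h2 | ⟨rfl, h2⟩
          · exact Or.inl (h2.trans h1)
          · exact Or.inl h1
        · rcases h2 with h2 | ⟨rfl, h2⟩
          · exact Or.inl h2
          · exact Or.inr ⟨rfl, ih h1 h2⟩

lemma asymm {u v : List X} (h : lexGT u v) : ¬ lexGT v u :=
  fun h' => irrefl u (trans h h')

lemma total (u v : List X) : lexGT u v ∨ u = v ∨ lexGT v u := by
  induction u generalizing v with
  | nil =>
    cases v with
    | nil => exact Or.inr (Or.inl rfl)
    | cons b v => exact Or.inl trivial
  | cons a u ih =>
    cases v with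
    | nil => exact Or.inr (Or.inr trivial)
    | cons b v =>
      rcases lt_trichotomy a b with h | rfl | h
      · exact Or.inr (Or.inr (Or.inl h))
      · rcases ih v with h | rfl | h
        · exact Or.inl (Or.inr ⟨rfl, h⟩)
        · exact Or.inr (Or.inl rfl)
        · exact Or.inr (Or.inr (Or.inr ⟨rfl, h⟩))
      · exact Or.inl (Or.inl h)

lemma not_gt_trans {a b c : List X} (h1 : ¬ lexGT a b) (h2 : ¬ lexGT b c) :
    ¬ lexGT a c := by
  intro h
  rcases total a b with h' | rfl | h'
  · exact h1 h'
  · exact h2 h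
  · exact h2 (trans h' h)

/-- a proper prefix is smaller. -/
lemma gt_of_prefix {u v : List X} (hv : v ≠ []) : lexGT u (u ++ v) := by
  induction u with
  | nil => cases v with
    | nil => exact absurd rfl hv
    | cons b v => trivial
  | cons a u ih => exact Or.inr ⟨rfl, ih⟩

lemma append_left_iff (w : List X) {u v : List X} :
    lexGT (w ++ u) (w ++ v) ↔ lexGT u v := by
  induction w with
  | nil => rfl
  | cons a w ih =>
    constructor
    · rintro (h | ⟨-, h⟩)
      · exact absurd h (lt_irrefl a)
      · exact ih.1 h
    · intro h
      exact Or.inr ⟨rfl, ih.2 h⟩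

lemma eq_len_append {u v x y : List X} (hlen : u.length = v.length)
    (h : lexGT (u ++ x) (v ++ y)) : lexGT u v ∨ (u = v ∧ lexGT x y) := by
  induction u generalizing v with
  | nil =>
    cases v with
    | nil => exact Or.inr ⟨rfl, h⟩
    | cons b v => simp at hlen
  | cons a u ih =>
    cases v with
    | nil => simp at hlen
    | cons b v =>
      rcases h with h | ⟨rfl, h⟩
      · exact Or.inl (Or.inl h)
      · rcases ih (by simpa using hlen) h with h' | ⟨rfl, h'⟩
        · exact Or.inl (Or.inr ⟨rfl, h'⟩)
        · exact Or.inr ⟨rfl, h'⟩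

/-- If `v` is not a prefix of `w`, comparison of `w` with `v ++ x` is decided
within `v`. -/
lemma gt_of_gt_append {w v x : List X} (hnp : ¬ v <+: w)
    (hlen : v.length ≤ w.length) (h : lexGT w (v ++ x)) : lexGT w v := by
  induction w generalizing v with
  | nil =>
    cases v with
    | nil => exact absurd (List.nil_prefix) hnp
    | cons b v => simp at hlen
  | cons a w ih =>
    cases v with
    | nil => exact absurd (List.nil_prefix) hnp
    | cons b v =>
      rcases h with h | ⟨rfl, h⟩
      · exact Or.inl h
      · refine Or.inr ⟨rfl, ih ?_ (by simpa using hlen) h⟩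
        intro hp
        obtain ⟨t, ht⟩ := hp
        exact hnp ⟨t, by rw [List.cons_append, ht]⟩

/-- A strict comparison not caused by the prefix relation is stable under
appending on both sides. -/
lemma stable_append {u v : List X} (hnp : ¬ u <+: v) (h : lexGT u v)
    (x y : List X) : lexGT (u ++ x) (v ++ y) := by
  induction u generalizing v with
  | nil => exact absurd (List.nil_prefix) hnp
  | cons a u ih =>
    cases v with
    | nil => exact absurd h (not_gt_nil _)
    | cons b v =>
      rcases h with h | ⟨rfl, h⟩
      · exact Or.inl h
      · refine Or.inr ⟨rfl, ih ?_ h⟩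
        intro hp
        obtain ⟨t, ht⟩ := hp
        exact hnp ⟨t, by rw [List.cons_append, ht]⟩

/-- A Lyndon word (ALSW read as minimal) is smaller than each of its proper
nonempty suffixes. -/
lemma gt_suffix {w u v : List X} (hw : IsALSW w) (hu : u ≠ []) (hv : v ≠ [])
    (hsplit : w = u ++ v) : lexGT w v := by
  have hrot : lexGT w (v ++ u) := hw.2 u v hu hv hsplit
  have hnp : ¬ v <+: w := by
    rintro ⟨s, hs⟩
    -- v is a border of w: w = v ++ s = u ++ v
    have hsne : s ≠ [] := by
      rintro rfl
      rw [List.append_nil] at hs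
      have hL := congrArg List.length hsplit
      rw [← hs] at hL
      simp only [List.length_append] at hL
      have := List.length_pos_iff.2 hu
      omega
    have hrot2 : lexGT w (s ++ v) := hw.2 v s hv hsne hs.symm
    -- lengths: |u| = |s|
    have hlen : u.length = s.length := by
      have := congrArg List.length (hsplit.symm.trans hs.symm)
      simp at this
      omega
    -- from w = u ++ v, hrot2 : lexGT (u ++ v) (s ++ v) gives lexGT u s
    have h1 : lexGT u s := by
      rcases eq_len_append hlen (by rw [← hsplit]; exact hrot2) with h | ⟨rfl, h⟩
      · exact h
      · exact absurd h (irrefl v)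
    -- from w = v ++ s, hrot : lexGT (v ++ s) (v ++ u) gives lexGT s u
    have h2 : lexGT s u := by
      have := hrot
      rw [← hs] at this
      exact (append_left_iff v).1 this
    exact asymm h1 h2
  have hlen : v.length ≤ w.length := by
    subst hsplit
    simp
  exact gt_of_gt_append hnp hlen hrot

/-- If `u, v` are Lyndon with `u < v` then `uv < v`. -/
lemma append_gt_right {u v : List X} (hu : IsALSW u) (hv : IsALSW v)
    (huv : lexGT u v) : lexGT (u ++ v) v := by
  by_cases hp : u <+: v
  · obtain ⟨r, hr⟩ := hp
    have hrne : r ≠ [] := by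
      rintro rfl
      rw [List.append_nil] at hr
      subst hr
      exact irrefl u huv
    subst hr
    rw [← List.append_assoc, List.append_assoc u u r]
    refine (append_left_iff u).2 ?_
    exact gt_suffix hv hu.1 hrne rfl
  · have := stable_append hp huv v []
    rwa [List.append_nil] at this

/-- Concatenation of Lyndon words `u < v` is Lyndon. -/
lemma concat_isALSW {u v : List X} (hu : IsALSW u) (hv : IsALSW v)
    (huv : lexGT u v) : IsALSW (u ++ v) := by
  constructor
  · intro h
    exact hu.1 (List.append_eq_nil_iff.1 h).1
  · intro s t hs ht hst
    -- the aligned case, used twice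
    have aligned : lexGT (u ++ v) (v ++ u) := by
      by_cases hp : u <+: v
      · obtain ⟨r, hr⟩ := hp
        have hrne : r ≠ [] := by
          rintro rfl
          rw [List.append_nil] at hr
          subst hr
          exact irrefl u huv
        subst hr
        rw [← List.append_assoc, List.append_assoc u u r, List.append_assoc u r u]
        exact (append_left_iff u).2 (hv.2 u r hu.1 hrne rfl)
      · exact stable_append hp huv v u
    rcases List.append_eq_append_iff.1 hst with ⟨p, hp1, hp2⟩ | ⟨m, hm1, hm2⟩
    · -- s = u ++ p, v = p ++ t
      cases p with
      | nil =>
        rw [List.append_nil] at hp1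
        subst hp1
        have : v = t := by simpa using hp2
        subst this
        exact aligned
      | cons pc pt =>
        set p := pc :: pt with hpdef
        have hpne : p ≠ [] := by simp [hpdef]
        have h1 : lexGT (u ++ v) t := trans (append_gt_right hu hv huv)
          (gt_suffix hv hpne ht hp2)
        have hnp : ¬ (u ++ v) <+: t := by
          intro hpre
          have h2 : t.length < (u ++ v).length := by
            have : v.length = p.length + t.length := by
              rw [hp2]; simp
            have hune : 0 < u.length := List.length_pos_iff.2 hu.1
            have hpne' : 0 < p.length := List.length_pos_iff.2 hpne
            simp only [List.length_append]
            omega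
          exact absurd hpre.length_le (by omega)
        have := stable_append hnp h1 [] s
        rw [List.append_nil] at this
        rw [hp1] at this ⊢
        exact this
    · -- u = s ++ m, t = m ++ v
      cases m with
      | nil =>
        rw [List.append_nil] at hm1
        subst hm1
        have : t = v := by simpa using hm2
        subst this
        exact aligned
      | cons mc mt =>
        set m := mc :: mt with hmdef
        have hmne : m ≠ [] := by simp [hmdef]
        have h1 : lexGT u m := gt_suffix hu hs hmne hm1
        have hnp : ¬ u <+: m := by
          intro hpre
          have : u.length ≤ m.length := hpre.length_le
          have : u.length = s.length + m.length := by rw [hm1]; simp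
          have hsne' : 0 < s.length := List.length_pos_iff.2 hs
          omega
        have := stable_append hnp h1 v (v ++ s)
        rw [hm2, List.append_assoc]
        exact this

lemma singleton_isALSW (x : X) : IsALSW [x] := by
  refine ⟨by simp, ?_⟩
  intro u v hu hv h
  have := congrArg List.length h
  simp [List.length_append] at this
  have := List.length_pos_iff.2 hu
  have := List.length_pos_iff.2 hv
  omega

/-- extract a bad adjacent pair from a failed chain -/
lemma chain'_fail {α : Type*} {p : α → α → Prop} :
    ∀ {l : List α}, ¬ List.Chain' p l → ∃ l₁ a b l₂, l = l₁ ++ a :: b :: l₂ ∧ ¬ p a b := by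
  intro l h
  induction l with
  | nil => exact absurd List.isChain_nil h
  | cons a l ih =>
    cases l with
    | nil => exact absurd (List.isChain_singleton a) h
    | cons b l =>
      simp only [List.Chain', List.isChain_cons_cons] at h
      by_cases hab : p a b
      · have : ¬ List.Chain' p (b :: l) := fun hc => h ⟨hab, hc⟩
        obtain ⟨l₁, x, y, l₂, hl, hxy⟩ := ih this
        exact ⟨a :: l₁, x, y, l₂, by rw [hl, List.cons_append], hxy⟩
      · exact ⟨[], a, b, l, rfl, hab⟩

lemma exists_chain_fact : ∀ (n : ℕ) (cs : List (List X)), cs.length ≤ n →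
    (∀ c ∈ cs, IsALSW c) →
    ∃ ds : List (List X), (∀ c ∈ ds, IsALSW c) ∧
      List.Chain' (fun a b => ¬ lexGT a b) ds ∧ ds.flatten = cs.flatten := by
  intro n
  induction n with
  | zero =>
    intro cs hlen _
    have : cs = [] := List.length_eq_zero_iff.1 (Nat.le_zero.1 hlen)
    subst this
    exact ⟨[], by simp, List.isChain_nil, rfl⟩
  | succ n ih =>
    intro cs hlen hall
    by_cases hc : List.Chain' (fun a b => ¬ lexGT a b) cs
    · exact ⟨cs, hall, hc, rfl⟩
    · obtain ⟨l₁, a, b, l₂, hl, hab⟩ := chain'_fail hc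
      have hab' : lexGT a b := not_not.1 hab
      have ha : IsALSW a := hall a (by rw [hl]; simp)
      have hb : IsALSW b := hall b (by rw [hl]; simp)
      have hmerge : IsALSW (a ++ b) := concat_isALSW ha hb hab'
      have hlen' : (l₁ ++ (a ++ b) :: l₂).length ≤ n := by
        have := congrArg List.length hl
        simp at this ⊢
        omega
      have hall' : ∀ c ∈ l₁ ++ (a ++ b) :: l₂, IsALSW c := by
        intro c hcmem
        rcases List.mem_append.1 hcmem with h | h
        · exact hall c (by rw [hl]; exact List.mem_append_left _ h)
        · rcases List.mem_cons.1 h with rfl | h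
          · exact hmerge
          · exact hall c (by rw [hl]; simp [h])
      obtain ⟨ds, h1, h2, h3⟩ := ih _ hlen' hall'
      refine ⟨ds, h1, h2, ?_⟩
      rw [h3, hl]
      simp

lemma flatten_ne_nil {cs : List (List X)} (hne : cs ≠ [])
    (hall : ∀ c ∈ cs, IsALSW c) : cs.flatten ≠ [] := by
  intro h
  cases cs with
  | nil => exact hne rfl
  | cons c cs =>
    rw [List.flatten_eq_nil_iff] at h
    exact (hall c (by simp)).1 (h c (by simp))

/-- The core uniqueness contradiction: if `r` is a nonempty proper suffix of the
Lyndon word `c` that is a prefix of `flatten ds`, and every element of `ds` is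
`≤ c`, we get a contradiction. -/
lemma no_suffix_prefix {c : List X} (hc : IsALSW c) :
    ∀ (ds : List (List X)), (∀ d ∈ ds, ¬ lexGT c d) →
      ∀ r q : List X, r ≠ [] → q ≠ [] → c = q ++ r → r <+: ds.flatten → False := by
  intro ds
  induction ds with
  | nil =>
    intro _ r q hr _ _ hpre
    simp at hpre
    exact hr hpre
  | cons d ds ih =>
    intro hle r q hr hq hsplit hpre
    have hcr : lexGT c r := gt_suffix hc hq hr hsplit
    rcases le_or_gt r.length d.length with h | h
    · have hrd : r <+: d :=
        List.prefix_of_prefix_length_le hpre (by simp [List.prefix_append]) h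
      rcases eq_or_lt_of_le h with heq | hlt
      · have : r = d := hrd.eq_of_length heq
        subst this
        exact hle r (by simp) hcr
      · obtain ⟨s, hs⟩ := hrd
        have hsne : s ≠ [] := by
          rintro rfl
          rw [List.append_nil] at hs
          subst hs
          omega
        have : lexGT r d := by rw [← hs]; exact gt_of_prefix hsne
        exact hle d (by simp) (trans hcr this)
    · have hdr : d <+: r := by
        refine List.prefix_of_prefix_length_le (by simp [List.prefix_append]) hpre (by omega)
      obtain ⟨r', hr'⟩ := hdr
      have hr'ne : r' ≠ [] := by
        rintro rfl
        rw [List.append_nil] at hr'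
        subst hr'
        omega
      have hpre' : r' <+: ds.flatten := by
        have : d ++ r' <+: d ++ ds.flatten := by rw [hr']; simpa using hpre
        exact (List.prefix_append_right_inj d).1 this
      exact ih (fun x hx => hle x (by simp [hx])) r' (q ++ d) hr'ne
        (by simp [hq]) (by rw [hsplit, ← hr', List.append_assoc]) hpre'

lemma chain'_le_of_head {d : List X} : ∀ {ds : List (List X)},
    List.Chain' (fun a b => ¬ lexGT a b) (d :: ds) → ∀ x ∈ ds, ¬ lexGT d x := by
  intro ds
  induction ds generalizing d with
  | nil => intro _ x hx; simp at hx
  | cons e ds ih =>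
    intro h x hx
    simp only [List.Chain', List.isChain_cons_cons] at h
    rcases List.mem_cons.1 hx with rfl | hx
    · exact h.1
    · exact not_gt_trans h.1 (ih h.2 x hx)

lemma head_eq {c d : List X} {cs ds : List (List X)}
    (hc : IsALSW c) (hd : IsALSW d)
    (hallc : ∀ x ∈ cs, IsALSW x) (halld : ∀ x ∈ ds, IsALSW x)
    (hchc : List.Chain' (fun a b => ¬ lexGT a b) (c :: cs))
    (hchd : List.Chain' (fun a b => ¬ lexGT a b) (d :: ds))
    (heq : (c :: cs).flatten = (d :: ds).flatten) (hlen : d.length ≤ c.length) :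
    c = d := by
  have hdc : d <+: c := by
    have h1 : d <+: (c :: cs).flatten := by
      rw [heq, List.flatten_cons]; exact List.prefix_append d _
    have h2 : c <+: (c :: cs).flatten := by
      rw [List.flatten_cons]; exact List.prefix_append c _
    exact List.prefix_of_prefix_length_le h1 h2 hlen
  obtain ⟨r, hr⟩ := hdc
  by_cases hrne : r = []
  · subst hrne; rw [List.append_nil] at hr; exact hr.symm
  · exfalso
    -- c = d ++ r, r nonempty; r is a prefix of ds.flatten
    have hpre : r <+: ds.flatten := by
      have h0 : d ++ r ++ cs.flatten = d ++ ds.flatten := by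
        rw [hr]; simpa using heq
      rw [List.append_assoc] at h0
      exact ⟨cs.flatten, (List.append_right_inj d).1 h0⟩
    have hdltc : lexGT d c := by rw [← hr]; exact gt_of_prefix hrne
    have hle : ∀ x ∈ ds, ¬ lexGT c x := by
      intro x hx hcx
      have hxd : ¬ lexGT d x := chain'_le_of_head hchd x hx
      rcases total x d with h' | rfl | h'
      · exact irrefl c (trans (trans hcx h') hdltc)
      · exact irrefl c (trans hcx hdltc)
      · exact hxd h'
    exact no_suffix_prefix hc ds hle r d hrne hd.1 hr.symm hpre

lemma fact_unique : ∀ (cs ds : List (List X)),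
    (∀ c ∈ cs, IsALSW c) → List.Chain' (fun a b => ¬ lexGT a b) cs →
    (∀ c ∈ ds, IsALSW c) → List.Chain' (fun a b => ¬ lexGT a b) ds →
    cs.flatten = ds.flatten → cs = ds := by
  intro cs
  induction cs with
  | nil =>
    intro ds _ _ halld _ heq
    cases ds with
    | nil => rfl
    | cons d ds =>
      exfalso
      exact flatten_ne_nil (by simp) halld heq.symm
  | cons c cs ih =>
    intro ds hallc hchc halld hchd heq
    cases ds with
    | nil =>
      exfalso
      exact flatten_ne_nil (by simp) hallc heq
    | cons d ds =>
      have hc : IsALSW c := hallc c (by simp)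
      have hd : IsALSW d := halld d (by simp)
      have hcd : c = d := by
        rcases le_or_gt d.length c.length with h | h
        · exact head_eq hc hd (fun x hx => hallc x (by simp [hx]))
            (fun x hx => halld x (by simp [hx])) hchc hchd heq h
        · exact (head_eq hd hc (fun x hx => halld x (by simp [hx]))
            (fun x hx => hallc x (by simp [hx])) hchd hchc heq.symm (by omega)).symm
      subst hcd
      have heq' : cs.flatten = ds.flatten := by
        simp only [List.flatten_cons] at heq
        exact (List.append_right_inj c).1 heq
      have := ih ds (fun x hx => hallc x (by simp [hx])) hchc.tail
        (fun x hx => halld x (by simp [hx])) hchd.tail heq'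
      rw [this]

end CFLaux

/-- Chen–Fox–Lyndon factorization: every nonempty word is uniquely a
concatenation `c₁c₂⋯cₙ` of ALSW's with `c₁ ≤ c₂ ≤ ⋯ ≤ cₙ` lexicographically. -/
theorem lyndon_factorization_existsUnique {X : Type*} [LinearOrder X]
    (w : List X) (hw : w ≠ []) :
    ∃! cs : List (List X),
      (∀ c ∈ cs, IsALSW c) ∧ List.Chain' (fun a b => ¬ lexGT a b) cs ∧
        cs.flatten = w := by
  obtain ⟨ds, h1, h2, h3⟩ := CFLaux.exists_chain_fact (w.map (fun x => [x])).length
    (w.map (fun x => [x])) le_rfl (by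
      intro c hc
      obtain ⟨x, -, rfl⟩ := List.mem_map.1 hc
      exact CFLaux.singleton_isALSW x)
  have hflat : ∀ u : List X, (u.map (fun x => [x])).flatten = u := by
    intro u
    induction u with
    | nil => rfl
    | cons a u ihu => simp [ihu]
  refine ⟨ds, ⟨h1, h2, by rw [h3, hflat]⟩, ?_⟩
  rintro es ⟨he1, he2, he3⟩
  exact CFLaux.fact_unique es ds he1 he2 h1 h2 (by rw [he3, h3, hflat])
end

section
/- In the Drinfeld–Kohno Lie algebra L_n, the ℤ-submodule A_i spanned by all Lie monomials in the generators {t_{ij} : i < j ≤ n−1} with fixed first index i is closed under bracketing with any generator t_{kl} with k ≥ i; consequently A_i is an ideal of the subalgebra generated by {t_{kl} : i ≤ k < l ≤ n−1}. -/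
/-- Index set for the generators `t_{ij}`, `1 ≤ i < j ≤ n-1`, of the
Drinfeld–Kohno Lie algebra `L_n` (0-indexed as pairs in `Fin (n-1)`). -/
abbrev DKIdx (n : ℕ) := {p : Fin (n - 1) × Fin (n - 1) // p.1 < p.2}

/-- The generator `t_{ij} = t_{ji}` of the free Lie algebra, for distinct `i, j`
(and `0` when `i = j`). -/
noncomputable def dkT (n : ℕ) (i j : Fin (n - 1)) : FreeLieAlgebra ℤ (DKIdx n) :=
  if h : i < j then FreeLieAlgebra.of ℤ (⟨(i, j), h⟩ : DKIdx n)
  else if h' : j < i then FreeLieAlgebra.of ℤ (⟨(j, i), h'⟩ : DKIdx n)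
  else 0

/-- The defining relations of the Drinfeld–Kohno Lie algebra:
`⁅t_{ij}, t_{kl}⁆ = 0` for distinct `i,j,k,l` and
`⁅t_{ij}, t_{ik} + t_{jk}⁆ = 0` for distinct `i,j,k`. -/
def dkRels (n : ℕ) : Set (FreeLieAlgebra ℤ (DKIdx n)) :=
  {p | ∃ i j k l : Fin (n - 1), i ≠ j ∧ i ≠ k ∧ i ≠ l ∧ j ≠ k ∧ j ≠ l ∧ k ≠ l ∧
        p = ⁅dkT n i j, dkT n k l⁆} ∪
  {p | ∃ i j k : Fin (n - 1), i ≠ j ∧ i ≠ k ∧ j ≠ k ∧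
        p = ⁅dkT n i j, dkT n i k + dkT n j k⁆}

/-- The Lie ideal generated by the Drinfeld–Kohno relations. -/
noncomputable def dkIdeal (n : ℕ) : LieIdeal ℤ (FreeLieAlgebra ℤ (DKIdx n)) :=
  LieSubmodule.lieSpan ℤ _ (dkRels n)

/-- The Drinfeld–Kohno Lie algebra `L_n` over `ℤ`. -/
abbrev DK (n : ℕ) := FreeLieAlgebra ℤ (DKIdx n) ⧸ dkIdeal n

/-- The image of the generator `t_{ij}` in `L_n`. -/
noncomputable def dkt (n : ℕ) (i j : Fin (n - 1)) : DK n :=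
  LieSubmodule.Quotient.mk (N := dkIdeal n) (dkT n i j)

/-- The Lie subalgebra `A_i` of the Drinfeld–Kohno Lie algebra generated by
the generators `t_{ij}` with fixed first index `i` (`i < j ≤ n-1`). -/
noncomputable def dkA (n : ℕ) (i : Fin (n - 1)) : LieSubalgebra ℤ (DK n) :=
  LieSubalgebra.lieSpan ℤ _ {x | ∃ j : Fin (n - 1), i < j ∧ x = dkt n i j}

lemma dkT_symm (n : ℕ) (i j : Fin (n - 1)) : dkT n i j = dkT n j i := by
  unfold dkT
  rcases lt_trichotomy i j with h | h | h
  · rw [dif_pos h, dif_neg (not_lt_of_gt h), dif_pos h]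
  · subst h; simp
  · rw [dif_neg (not_lt_of_gt h), dif_pos h, dif_pos h]

lemma dkt_symm (n : ℕ) (i j : Fin (n - 1)) : dkt n i j = dkt n j i := by
  unfold dkt; rw [dkT_symm]

lemma dk_rel1 (n : ℕ) (i j k l : Fin (n - 1)) (hij : i ≠ j) (hik : i ≠ k)
    (hil : i ≠ l) (hjk : j ≠ k) (hjl : j ≠ l) (hkl : k ≠ l) :
    ⁅dkt n i j, dkt n k l⁆ = 0 := by
  rw [dkt, dkt, ← LieSubmodule.Quotient.mk_bracket,
    LieSubmodule.Quotient.mk_eq_zero']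
  exact LieSubmodule.subset_lieSpan (Or.inl ⟨i, j, k, l, hij, hik, hil, hjk, hjl, hkl, rfl⟩)

lemma dk_rel2 (n : ℕ) (i j k : Fin (n - 1)) (hij : i ≠ j) (hik : i ≠ k)
    (hjk : j ≠ k) : ⁅dkt n i j, dkt n i k⁆ + ⁅dkt n i j, dkt n j k⁆ = 0 := by
  have : ⁅dkt n i j, dkt n i k + dkt n j k⁆ = 0 := by
    show ⁅LieSubmodule.Quotient.mk (N := dkIdeal n) (dkT n i j),
      LieSubmodule.Quotient.mk (N := dkIdeal n) (dkT n i k) +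
      LieSubmodule.Quotient.mk (N := dkIdeal n) (dkT n j k)⁆ = 0
    rw [← Submodule.Quotient.mk_add, ← LieSubmodule.Quotient.mk_bracket,
      LieSubmodule.Quotient.mk_eq_zero']
    exact LieSubmodule.subset_lieSpan (Or.inr ⟨i, j, k, hij, hik, hjk, rfl⟩)
  rw [← lie_add]; exact this

lemma mem_dkA_gen (n : ℕ) (i j : Fin (n - 1)) (h : i < j) :
    dkt n i j ∈ dkA n i :=
  LieSubalgebra.subset_lieSpan ⟨j, h, rfl⟩

lemma dk_base (n : ℕ) (i k l j : Fin (n - 1)) (hik : i ≤ k) (hkl : k < l)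
    (hij : i < j) : ⁅dkt n k l, dkt n i j⁆ ∈ dkA n i := by
  rcases eq_or_lt_of_le hik with rfl | hik'
  · exact (dkA n i).lie_mem (mem_dkA_gen n i l hkl) (mem_dkA_gen n i j hij)
  · by_cases hjk : j = k
    · subst hjk
      have hjl : j < l := hkl
      have h2 := dk_rel2 n i j l hij.ne (hij.trans hjl).ne hjl.ne
      have : ⁅dkt n j l, dkt n i j⁆ = ⁅dkt n i j, dkt n i l⁆ := by
        rw [← lie_skew]
        exact neg_eq_of_add_eq_zero_left h2
      rw [this]
      exact (dkA n i).lie_mem (mem_dkA_gen n i j hij) (mem_dkA_gen n i l (hij.trans hjl))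
    · by_cases hjl : j = l
      · subst hjl
        have h2 := dk_rel2 n i j k hij.ne hik'.ne (Ne.symm (fun h => hjk h.symm))
        rw [dkt_symm n k j]
        have : ⁅dkt n j k, dkt n i j⁆ = ⁅dkt n i j, dkt n i k⁆ := by
          rw [← lie_skew]
          exact neg_eq_of_add_eq_zero_left h2
        rw [this]
        exact (dkA n i).lie_mem (mem_dkA_gen n i j hij) (mem_dkA_gen n i k hik')
      · have h1 := dk_rel1 n i j k l hij.ne hik'.ne (hik'.trans hkl).ne hjk hjl hkl.ne
        rw [← lie_skew, h1, neg_zero]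
        exact (dkA n i).zero_mem

/-- `A_i` is closed under bracketing with any generator `t_{kl}` with `i ≤ k < l`;
consequently `A_i` is an ideal of the subalgebra generated by
`{t_{kl} : i ≤ k < l ≤ n-1}`. -/
theorem dkA_ideal (n : ℕ) (hn : 2 < n) (i : Fin (n - 1)) :
    (∀ k l : Fin (n - 1), i ≤ k → k < l → ∀ a ∈ dkA n i, ⁅dkt n k l, a⁆ ∈ dkA n i) ∧
    (∀ x ∈ LieSubalgebra.lieSpan ℤ (DK n)
        {x | ∃ k l : Fin (n - 1), i ≤ k ∧ k < l ∧ x = dkt n k l},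
      ∀ a ∈ dkA n i, ⁅x, a⁆ ∈ dkA n i) := by
  have part1 : ∀ k l : Fin (n - 1), i ≤ k → k < l →
      ∀ a ∈ dkA n i, ⁅dkt n k l, a⁆ ∈ dkA n i := by
    intro k l hik hkl
    let S : LieSubalgebra ℤ (DK n) :=
      { carrier := {a | a ∈ dkA n i ∧ ⁅dkt n k l, a⁆ ∈ dkA n i}
        add_mem' := fun ha hb => ⟨(dkA n i).add_mem ha.1 hb.1, by
          rw [lie_add]; exact (dkA n i).add_mem ha.2 hb.2⟩
        zero_mem' := ⟨(dkA n i).zero_mem, by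
          rw [lie_zero]; exact (dkA n i).zero_mem⟩
        smul_mem' := fun c x hx => ⟨(dkA n i).smul_mem c hx.1, by
          rw [lie_smul]; exact (dkA n i).smul_mem c hx.2⟩
        lie_mem' := fun {x y} hx hy => ⟨(dkA n i).lie_mem hx.1 hy.1, by
          rw [leibniz_lie]
          exact (dkA n i).add_mem ((dkA n i).lie_mem hx.2 hy.1)
            ((dkA n i).lie_mem hx.1 hy.2)⟩ }
    have hle : dkA n i ≤ S := by
      rw [dkA, LieSubalgebra.lieSpan_le]
      rintro x ⟨j, hij, rfl⟩
      exact ⟨mem_dkA_gen n i j hij, dk_base n i k l j hik hkl hij⟩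
    exact fun a ha => (hle ha).2
  refine ⟨part1, ?_⟩
  let T : LieSubalgebra ℤ (DK n) :=
    { carrier := {x | ∀ a ∈ dkA n i, ⁅x, a⁆ ∈ dkA n i}
      add_mem' := fun hx hy a ha => by
        rw [add_lie]; exact (dkA n i).add_mem (hx a ha) (hy a ha)
      zero_mem' := fun a ha => by rw [zero_lie]; exact (dkA n i).zero_mem
      smul_mem' := fun c x hx a ha => by
        rw [smul_lie]; exact (dkA n i).smul_mem c (hx a ha)
      lie_mem' := fun {x y} hx hy a ha => by
        rw [lie_lie]
        exact (dkA n i).sub_mem (hx _ ((dkA n i).mem_coe.mpr (hy a ha)))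
          (hy _ ((dkA n i).mem_coe.mpr (hx a ha))) }
  have hle : LieSubalgebra.lieSpan ℤ (DK n)
      {x | ∃ k l : Fin (n - 1), i ≤ k ∧ k < l ∧ x = dkt n k l} ≤ T := by
    rw [LieSubalgebra.lieSpan_le]
    rintro x ⟨k, l, hik, hkl, rfl⟩
    exact part1 k l hik hkl
  exact fun x hx => hle hx
end

section
/- The Drinfeld–Kohno Lie algebra L_n is, as a ℤ-module, the direct sum L_n = A_1 ⊕ A_2 ⊕ ⋯ ⊕ A_{n−2}, where A_i is the Lie subalgebra generated by {t_{ij} : i < j ≤ n−1}; i.e., L_n is an iterated semidirect product of the subalgebras A_i. -/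
namespace DKProof

variable {n : ℕ}

lemma dkT_symm (i j : Fin (n - 1)) : dkT n i j = dkT n j i := by
  unfold dkT
  rcases lt_trichotomy i j with h | h | h
  · rw [dif_pos h, dif_neg (asymm h), dif_pos h]
  · subst h; rfl
  · rw [dif_neg (asymm h), dif_pos h, dif_pos h]

lemma dkT_self (i : Fin (n - 1)) : dkT n i i = 0 := by
  unfold dkT; rw [dif_neg (lt_irrefl i), dif_neg (lt_irrefl i)]

lemma dkt_symm (i j : Fin (n - 1)) : dkt n i j = dkt n j i := by
  unfold dkt; rw [dkT_symm]

lemma dkt_self (i : Fin (n - 1)) : dkt n i i = 0 := by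
  unfold dkt; rw [dkT_self]; exact (LieSubmodule.Quotient.mk_eq_zero' ).mpr (dkIdeal n).zero_mem

lemma mk_rel_zero {x : FreeLieAlgebra ℤ (DKIdx n)} (hx : x ∈ dkRels n) :
    (LieSubmodule.Quotient.mk (N := dkIdeal n) x) = 0 := by
  rw [LieSubmodule.Quotient.mk_eq_zero']
  exact LieSubmodule.subset_lieSpan hx

lemma dk_rel1 {i j k l : Fin (n - 1)} (hij : i ≠ j) (hik : i ≠ k) (hil : i ≠ l)
    (hjk : j ≠ k) (hjl : j ≠ l) (hkl : k ≠ l) :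
    ⁅dkt n i j, dkt n k l⁆ = 0 := by
  have h := mk_rel_zero (n := n) (Or.inl ⟨i, j, k, l, hij, hik, hil, hjk, hjl, hkl, rfl⟩)
  rwa [LieSubmodule.Quotient.mk_bracket] at h

lemma dk_rel2 {i j k : Fin (n - 1)} (hij : i ≠ j) (hik : i ≠ k) (hjk : j ≠ k) :
    ⁅dkt n i j, dkt n i k⁆ + ⁅dkt n i j, dkt n j k⁆ = 0 := by
  have h := mk_rel_zero (n := n) (Or.inr ⟨i, j, k, hij, hik, hjk, rfl⟩)
  rw [LieSubmodule.Quotient.mk_bracket] at h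
  have : (LieSubmodule.Quotient.mk (N := dkIdeal n) (dkT n i k + dkT n j k))
      = dkt n i k + dkt n j k := by
    exact Submodule.Quotient.mk_add _
  rw [this, lie_add] at h
  exact h

end DKProof

namespace DKProof
variable {n : ℕ}

lemma freeLie_span_top (R : Type*) (X : Type*) [CommRing R] :
    LieSubalgebra.lieSpan R (FreeLieAlgebra R X) (Set.range (FreeLieAlgebra.of R)) = ⊤ := by
  set K := LieSubalgebra.lieSpan R (FreeLieAlgebra R X) (Set.range (FreeLieAlgebra.of R)) with hK
  have key : K.incl.comp (FreeLieAlgebra.lift R fun x =>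
      (⟨FreeLieAlgebra.of R x, LieSubalgebra.subset_lieSpan ⟨x, rfl⟩⟩ : K)) = LieHom.id := by
    apply FreeLieAlgebra.hom_ext
    intro x
    rw [LieHom.comp_apply, FreeLieAlgebra.lift_of_apply]
    rfl
  rw [eq_top_iff]
  intro y _
  have h := LieHom.congr_fun key y
  rw [LieHom.comp_apply] at h
  have h2 : (((FreeLieAlgebra.lift R fun x =>
      (⟨FreeLieAlgebra.of R x, LieSubalgebra.subset_lieSpan ⟨x, rfl⟩⟩ : K)) y : K) :
        FreeLieAlgebra R X) = y := h
  rw [← h2]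
  exact SetLike.coe_mem _

lemma dk_mem_of_forall {K : LieSubalgebra ℤ (DK n)}
    (hgen : ∀ i j : Fin (n - 1), i < j → dkt n i j ∈ K) (x : DK n) : x ∈ K := by
  obtain ⟨y, rfl⟩ := LieSubmodule.Quotient.surjective_mk' (dkIdeal n) x
  have hy : y ∈ LieSubalgebra.lieSpan ℤ (FreeLieAlgebra ℤ (DKIdx n))
      (Set.range (FreeLieAlgebra.of ℤ)) := by
    erw [freeLie_span_top]; trivial
  refine LieSubalgebra.lieSpan_induction (R := ℤ)
    (p := fun z _ => LieSubmodule.Quotient.mk (N := dkIdeal n) z ∈ K) ?_ ?_ ?_ ?_ ?_ hy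
  · rintro _ ⟨p, rfl⟩
    show LieSubmodule.Quotient.mk (N := dkIdeal n) (FreeLieAlgebra.of ℤ p) ∈ K
    have h1 : FreeLieAlgebra.of ℤ p = dkT n p.1.1 p.1.2 := by
      rw [dkT, dif_pos p.2]
    rw [h1]
    exact hgen _ _ p.2
  · show LieSubmodule.Quotient.mk (N := dkIdeal n) (0 : FreeLieAlgebra ℤ (DKIdx n)) ∈ K
    have : LieSubmodule.Quotient.mk (N := dkIdeal n) (0 : FreeLieAlgebra ℤ (DKIdx n)) = 0 :=
      (LieSubmodule.Quotient.mk_eq_zero').mpr (dkIdeal n).zero_mem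
    rw [this]; exact K.zero_mem
  · intro x y _ _ hx hy
    show LieSubmodule.Quotient.mk (N := dkIdeal n) (x + y) ∈ K
    have : LieSubmodule.Quotient.mk (N := dkIdeal n) (x + y)
        = LieSubmodule.Quotient.mk (N := dkIdeal n) x
          + LieSubmodule.Quotient.mk (N := dkIdeal n) y := Submodule.Quotient.mk_add _
    rw [this]; exact K.add_mem hx hy
  · intro r x _ hx
    show LieSubmodule.Quotient.mk (N := dkIdeal n) (r • x) ∈ K
    have : LieSubmodule.Quotient.mk (N := dkIdeal n) (r • x)
        = r • LieSubmodule.Quotient.mk (N := dkIdeal n) x := Submodule.Quotient.mk_smul _ _ _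
    rw [this]; exact K.smul_mem r hx
  · intro x y _ _ hx hy
    show LieSubmodule.Quotient.mk (N := dkIdeal n) ⁅x, y⁆ ∈ K
    rw [LieSubmodule.Quotient.mk_bracket]
    exact K.lie_mem hx hy

end DKProof

namespace DKProof
variable {n : ℕ}

lemma gen_mem {i j : Fin (n - 1)} (h : i < j) : dkt n i j ∈ dkA n i :=
  LieSubalgebra.subset_lieSpan ⟨j, h, rfl⟩

lemma key1 {i j k l : Fin (n - 1)} (hij : i < j) (hik : i < k) (hjk : j ≠ k)
    (hil : i < l) : ⁅dkt n j k, dkt n i l⁆ ∈ dkA n i := by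
  by_cases hlj : l = j
  · subst hlj
    have h2 := dk_rel2 (ne_of_lt hij) (ne_of_lt hik) hjk
    -- ⁅t_il, t_ik⁆ + ⁅t_il, t_lk⁆ = 0   (here j := l)
    have h3 : ⁅dkt n l k, dkt n i l⁆ = ⁅dkt n i l, dkt n i k⁆ := by
      rw [← lie_skew, neg_eq_iff_add_eq_zero, add_comm]
      exact h2
    rw [h3]
    exact (dkA n i).lie_mem (gen_mem hij) (gen_mem hik)
  · by_cases hlk : l = k
    · subst hlk
      have h2 := dk_rel2 (ne_of_lt hik) (ne_of_lt hij) (Ne.symm hjk)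
      -- ⁅t_il, t_ij⁆ + ⁅t_il, t_lj⁆ = 0  (with roles i l j)
      have h3 : ⁅dkt n j l, dkt n i l⁆ = ⁅dkt n i l, dkt n i j⁆ := by
        rw [dkt_symm j l, ← lie_skew, neg_eq_iff_add_eq_zero, add_comm]
        exact h2
      rw [h3]
      exact (dkA n i).lie_mem (gen_mem hik) (gen_mem hij)
    · have h0 : ⁅dkt n j k, dkt n i l⁆ = 0 :=
        dk_rel1 hjk (Ne.symm (ne_of_lt hij)) (fun h => hlj h.symm)
          (Ne.symm (ne_of_lt hik)) (fun h => hlk h.symm) (ne_of_lt hil)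
      rw [h0]
      exact (dkA n i).zero_mem

lemma key2 {i j k : Fin (n - 1)} (hij : i < j) (hik : i < k) (hjk : j ≠ k) :
    ∀ a ∈ dkA n i, ⁅dkt n j k, a⁆ ∈ dkA n i := by
  intro a ha
  have H : a ∈ dkA n i ∧ ⁅dkt n j k, a⁆ ∈ dkA n i := by
    refine LieSubalgebra.lieSpan_induction (R := ℤ)
      (p := fun a _ => a ∈ dkA n i ∧ ⁅dkt n j k, a⁆ ∈ dkA n i) ?_ ?_ ?_ ?_ ?_ ha
    · rintro _ ⟨l, hil, rfl⟩
      exact ⟨gen_mem hil, key1 hij hik hjk hil⟩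
    · simp only [lie_zero]
      exact ⟨(dkA n i).zero_mem, (dkA n i).zero_mem⟩
    · intro x y _ _ hx hy
      refine ⟨(dkA n i).add_mem hx.1 hy.1, ?_⟩
      rw [lie_add]
      exact (dkA n i).add_mem hx.2 hy.2
    · intro r x _ hx
      refine ⟨(dkA n i).smul_mem r hx.1, ?_⟩
      rw [lie_smul]
      exact (dkA n i).smul_mem r hx.2
    · intro x y _ _ hx hy
      refine ⟨(dkA n i).lie_mem hx.1 hy.1, ?_⟩
      rw [leibniz_lie]
      exact (dkA n i).add_mem ((dkA n i).lie_mem hx.2 hy.1) ((dkA n i).lie_mem hx.1 hy.2)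
  exact H.2

lemma key3 {i j : Fin (n - 1)} (hij : i < j) :
    ∀ x ∈ dkA n j, ∀ a ∈ dkA n i, ⁅x, a⁆ ∈ dkA n i := by
  intro x hx
  refine LieSubalgebra.lieSpan_induction (R := ℤ)
    (p := fun x _ => ∀ a ∈ dkA n i, ⁅x, a⁆ ∈ dkA n i) ?_ ?_ ?_ ?_ ?_ hx
  · rintro _ ⟨k, hjk, rfl⟩
    exact fun a ha => key2 hij (hij.trans hjk) (ne_of_lt hjk) a ha
  · intro a _; rw [zero_lie]; exact (dkA n i).zero_mem
  · intro x y _ _ hx hy a ha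
    rw [add_lie]
    exact (dkA n i).add_mem (hx a ha) (hy a ha)
  · intro r x _ hx a ha
    rw [smul_lie]
    exact (dkA n i).smul_mem r (hx a ha)
  · intro x y _ _ hx hy a ha
    rw [lie_lie]
    exact (dkA n i).sub_mem (hx _ (hy a ha)) (hy _ (hx a ha))

end DKProof

noncomputable def dkF (n m : ℕ) : FreeLieAlgebra ℤ (DKIdx n) →ₗ⁅ℤ⁆ DK n :=
  FreeLieAlgebra.lift ℤ fun p => if ((p.1.1 : ℕ) < m) then 0 else dkt n p.1.1 p.1.2

namespace DKProof
variable {n : ℕ}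

lemma dkF_dkT (m : ℕ) (a b : Fin (n - 1)) :
    dkF n m (dkT n a b) = if ((a : ℕ) < m ∨ (b : ℕ) < m) then 0 else dkt n a b := by
  rcases lt_trichotomy a b with h | h | h
  · rw [dkT, dif_pos h, dkF]; erw [FreeLieAlgebra.lift_of_apply]
    by_cases hm : (a : ℕ) < m
    · rw [if_pos hm, if_pos (Or.inl hm)]
    · have hb : ¬ ((b : ℕ) < m) := by
        have := (Fin.lt_iff_val_lt_val.mp h); omega
      rw [if_neg hm, if_neg (by push_neg; constructor <;> omega)]
  · subst h
    rw [dkT_self, map_zero, dkt_self]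
    by_cases hm : (a : ℕ) < m ∨ (a : ℕ) < m <;> simp [hm]
  · rw [dkT, dif_neg (asymm h), dif_pos h, dkF]; erw [FreeLieAlgebra.lift_of_apply]
    by_cases hm : (b : ℕ) < m
    · rw [if_pos hm, if_pos (Or.inr hm)]
    · have ha : ¬ ((a : ℕ) < m) := by
        have := (Fin.lt_iff_val_lt_val.mp h); omega
      rw [if_neg hm, if_neg (by push_neg; constructor <;> omega), dkt_symm]

lemma dkIdeal_le_ker (m : ℕ) : dkIdeal n ≤ (dkF n m).ker := by
  refine LieSubmodule.lieSpan_le.mpr ?_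
  rintro x (⟨i, j, k, l, hij, hik, hil, hjk, hjl, hkl, rfl⟩ | ⟨i, j, k, hij, hik, hjk, rfl⟩)
  · simp only [SetLike.mem_coe, LieHom.mem_ker]
    rw [LieHom.map_lie, dkF_dkT, dkF_dkT]
    split_ifs with h1 h2
    · rw [zero_lie]
    · rw [zero_lie]
    · rw [lie_zero]
    · exact dk_rel1 hij hik hil hjk hjl hkl
  · simp only [SetLike.mem_coe, LieHom.mem_ker]
    rw [LieHom.map_lie, map_add, dkF_dkT, dkF_dkT, dkF_dkT]
    by_cases h1 : (i : ℕ) < m ∨ (j : ℕ) < m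
    · rw [if_pos h1, zero_lie]
    · push_neg at h1
      by_cases hc : (k : ℕ) < m
      · rw [if_neg (by push_neg; exact h1), if_pos (Or.inr hc), if_pos (Or.inr hc), add_zero,
          lie_zero]
      · rw [if_neg (by push_neg; exact h1), if_neg (by push_neg; exact ⟨h1.1, le_of_not_gt hc⟩),
          if_neg (by push_neg; exact ⟨h1.2, le_of_not_gt hc⟩)]
        have := dk_rel2 hij hik hjk
        rw [lie_add]
        exact this

end DKProof

noncomputable def dkPhi (n m : ℕ) : DK n →ₗ[ℤ] DK n :=
  Submodule.liftQ (dkIdeal n).toSubmodule (dkF n m).toLinearMap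
    (fun x hx => by
      rw [LinearMap.mem_ker]
      exact (LieHom.mem_ker).mp (DKProof.dkIdeal_le_ker m hx))

namespace DKProof
variable {n : ℕ}

lemma dkPhi_mk (m : ℕ) (x : FreeLieAlgebra ℤ (DKIdx n)) :
    dkPhi n m (LieSubmodule.Quotient.mk (N := dkIdeal n) x) = dkF n m x := rfl

lemma dkPhi_lie (m : ℕ) (x y : DK n) :
    dkPhi n m ⁅x, y⁆ = ⁅dkPhi n m x, dkPhi n m y⁆ := by
  obtain ⟨x, rfl⟩ := LieSubmodule.Quotient.surjective_mk' (dkIdeal n) x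
  obtain ⟨y, rfl⟩ := LieSubmodule.Quotient.surjective_mk' (dkIdeal n) y
  show dkPhi n m ⁅LieSubmodule.Quotient.mk (N := dkIdeal n) x,
      LieSubmodule.Quotient.mk (N := dkIdeal n) y⁆ = _
  rw [← LieSubmodule.Quotient.mk_bracket, dkPhi_mk]
  show _ = ⁅dkPhi n m (LieSubmodule.Quotient.mk (N := dkIdeal n) x),
      dkPhi n m (LieSubmodule.Quotient.mk (N := dkIdeal n) y)⁆
  rw [dkPhi_mk, dkPhi_mk, LieHom.map_lie]

lemma dkPhi_dkt (m : ℕ) (a b : Fin (n - 1)) :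
    dkPhi n m (dkt n a b) = if ((a : ℕ) < m ∨ (b : ℕ) < m) then 0 else dkt n a b := by
  rw [dkt, dkPhi_mk, dkF_dkT]
  rfl

lemma phi_fix {i : Fin (n - 1)} {m : ℕ} (hm : m ≤ (i : ℕ)) :
    ∀ x ∈ dkA n i, dkPhi n m x = x := by
  intro x hx
  refine LieSubalgebra.lieSpan_induction (R := ℤ) (p := fun x _ => dkPhi n m x = x) ?_ ?_ ?_ ?_ ?_ hx
  · rintro _ ⟨j, hij, rfl⟩
    rw [dkPhi_dkt, if_neg]
    push_neg
    have := Fin.lt_iff_val_lt_val.mp hij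
    omega
  · exact map_zero _
  · intro x y _ _ hx hy
    rw [map_add, hx, hy]
  · intro r x _ hx
    rw [map_smul, hx]
  · intro x y _ _ hx hy
    rw [dkPhi_lie, hx, hy]

lemma phi_kill {i : Fin (n - 1)} {m : ℕ} (hm : (i : ℕ) < m) :
    ∀ x ∈ dkA n i, dkPhi n m x = 0 := by
  intro x hx
  refine LieSubalgebra.lieSpan_induction (R := ℤ) (p := fun x _ => dkPhi n m x = 0) ?_ ?_ ?_ ?_ ?_ hx
  · rintro _ ⟨j, hij, rfl⟩
    rw [dkPhi_dkt, if_pos (Or.inl hm)]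
  · exact map_zero _
  · intro x y _ _ hx hy
    rw [map_add, hx, hy, add_zero]
  · intro r x _ hx
    rw [map_smul, hx, smul_zero]
  · intro x y _ _ hx hy
    rw [dkPhi_lie, hx, zero_lie]

end DKProof

/-- As a `ℤ`-module, the Drinfeld–Kohno Lie algebra is the direct sum
`L_n = A_1 ⊕ A_2 ⊕ ⋯ ⊕ A_{n-2}`: the underlying submodules of the subalgebras
`A_i` are independent and their supremum is all of `L_n`. -/
theorem dk_direct_sum (n : ℕ) (hn : 2 < n) :
    iSupIndep (fun i : Fin (n - 2) =>
      (dkA n (Fin.castLE (by omega) i)).toSubmodule) ∧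
    (⨆ i : Fin (n - 2), (dkA n (Fin.castLE (by omega) i)).toSubmodule) = ⊤ := by
  open DKProof in
  have hle : n - 2 ≤ n - 1 := by omega
  constructor
  · intro i
    rw [Submodule.disjoint_def]
    intro x hxi hxrest
    set m : ℕ := (i : ℕ) with hm
    set ψ : DK n →ₗ[ℤ] DK n := dkPhi n m - dkPhi n (m + 1) with hψ
    have hxA : x ∈ dkA n (Fin.castLE hle i) :=
      (LieSubalgebra.mem_toSubmodule _).mp hxi
    have hx1 : ψ x = x := by
      rw [hψ, LinearMap.sub_apply]
      rw [DKProof.phi_fix (by simp [Fin.coe_castLE, hm]) x hxA]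
      rw [DKProof.phi_kill (by simp [Fin.coe_castLE, hm]) x hxA]
      rw [sub_zero]
    have hker : (⨆ j, ⨆ (_ : j ≠ i),
        (dkA n (Fin.castLE (by omega : n - 2 ≤ n - 1) j)).toSubmodule) ≤ LinearMap.ker ψ := by
      refine iSup_le fun j => iSup_le fun hj => ?_
      intro y hy
      have hyA : y ∈ dkA n (Fin.castLE hle j) := (LieSubalgebra.mem_toSubmodule _).mp hy
      rw [LinearMap.mem_ker, hψ, LinearMap.sub_apply]
      rcases lt_or_gt_of_ne (fun h => hj (Fin.ext h) : (j : ℕ) ≠ (i : ℕ)) with h | h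
      · rw [DKProof.phi_kill (by simp [Fin.coe_castLE]; omega) y hyA,
          DKProof.phi_kill (by simp [Fin.coe_castLE]; omega) y hyA, sub_zero]
      · rw [DKProof.phi_fix (by simp [Fin.coe_castLE]; omega) y hyA,
          DKProof.phi_fix (by simp [Fin.coe_castLE]; omega) y hyA, sub_self]
    have := hker hxrest
    rw [LinearMap.mem_ker] at this
    rw [← hx1, this]
  · apply le_antisymm le_top
    set S : Submodule ℤ (DK n) :=
      ⨆ i : Fin (n - 2), (dkA n (Fin.castLE (by omega : n - 2 ≤ n - 1) i)).toSubmodule with hS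
    have hAS : ∀ i : Fin (n - 2), ∀ x ∈ dkA n (Fin.castLE hle i), x ∈ S := by
      intro i x hx
      refine le_iSup (fun i : Fin (n - 2) =>
        (dkA n (Fin.castLE (by omega : n - 2 ≤ n - 1) i)).toSubmodule) i ?_
      exact (LieSubalgebra.mem_toSubmodule _).mpr hx
    have claim1 : ∀ (i : Fin (n - 2)) (x : DK n), x ∈ dkA n (Fin.castLE hle i) →
        ∀ (j : Fin (n - 2)) (y : DK n), y ∈ dkA n (Fin.castLE hle j) → ⁅x, y⁆ ∈ S := by
      intro i x hx j y hy
      rcases lt_trichotomy (Fin.castLE hle i) (Fin.castLE hle j) with h | h | h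
      · rw [← lie_skew]
        exact S.neg_mem (hAS i _ (DKProof.key3 h y hy x hx))
      · rw [h] at hx
        exact hAS j _ ((dkA n (Fin.castLE hle j)).lie_mem hx hy)
      · exact hAS j _ (DKProof.key3 h x hx y hy)
    have claim2 : ∀ x ∈ S, ∀ (j : Fin (n - 2)) (y : DK n),
        y ∈ dkA n (Fin.castLE hle j) → ⁅x, y⁆ ∈ S := by
      intro x hx
      refine Submodule.iSup_induction (x := x) _ hx ?_ ?_ ?_
      · intro i x hxi j y hy
        exact claim1 i x ((LieSubalgebra.mem_toSubmodule _).mp hxi) j y hy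
      · intro j y _
        rw [zero_lie]; exact S.zero_mem
      · intro a b ha hb j y hy
        rw [add_lie]; exact S.add_mem (ha j y hy) (hb j y hy)
    have hS_lie : ∀ x ∈ S, ∀ y ∈ S, ⁅x, y⁆ ∈ S := by
      intro x hx y hy
      refine Submodule.iSup_induction (x := y) _ hy ?_ ?_ ?_
      · intro j y hyj
        exact claim2 x hx j y ((LieSubalgebra.mem_toSubmodule _).mp hyj)
      · rw [lie_zero]; exact S.zero_mem
      · intro a b ha hb
        rw [lie_add]; exact S.add_mem ha hb
    set T : LieSubalgebra ℤ (DK n) :=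
      { S with lie_mem' := fun {x y} hx hy => hS_lie x hx y hy } with hT
    intro x _
    have hxT : x ∈ T := by
      refine DKProof.dk_mem_of_forall (fun a b hab => ?_) x
      have hb : (b : ℕ) ≤ n - 2 := by omega
      have ha : (a : ℕ) < n - 2 := by
        have := Fin.lt_iff_val_lt_val.mp hab; omega
      have hca : Fin.castLE hle (⟨(a : ℕ), ha⟩ : Fin (n - 2)) = a := Fin.ext rfl
      show dkt n a b ∈ S
      refine hAS ⟨(a : ℕ), ha⟩ _ ?_
      rw [hca]
      exact DKProof.gen_mem hab
    exact hxT
end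

section
/- In the Kukin Lie algebra A_P, if two words u, v ∈ {x,y}* are equal in the semigroup P, then ⌊z u⌋ = ⌊z v⌋ in A_P. -/
/-- Generators of the Kukin Lie algebra: `x, x̂, y, ŷ, z`. -/
inductive KGen : Type
  | x | xh | y | yh | z
  deriving DecidableEq

/-- Letters of the semigroup alphabet `{x, y}`, encoded by `Bool`
(`false ↦ x`, `true ↦ y`); words are lists of letters. -/
noncomputable def letterF (k : Type*) [Field k] : Bool → FreeLieAlgebra k KGen
  | false => FreeLieAlgebra.of k KGen.x
  | true  => FreeLieAlgebra.of k KGen.y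

/-- The hatted generator corresponding to a letter. -/
noncomputable def hatF (k : Type*) [Field k] : Bool → FreeLieAlgebra k KGen
  | false => FreeLieAlgebra.of k KGen.xh
  | true  => FreeLieAlgebra.of k KGen.yh

/-- The left-normed bracketing `⌊z w⌋ = [[…[[z,w₁],w₂],…],w_m]` of an element
with the letters of a word. -/
def lnb {L : Type*} [LieRing L] (f : Bool → L) : L → List Bool → L
  | z, [] => z
  | z, a :: w => lnb f ⁅z, f a⁆ w

/-- The defining relations of the Kukin Lie algebra `A_P` for a semigroup
presentation `P = ⟨x, y ∣ uᵢ = vᵢ (i ∈ I)⟩`: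
`[x̂,x] = [x̂,y] = [ŷ,x] = [ŷ,y] = 0`, `[x̂,z] = -[z,x]`, `[ŷ,z] = -[z,y]`, and
`⌊z uᵢ⌋ = ⌊z vᵢ⌋` for all `i`. -/
def kukinRels (k : Type*) [Field k] {I : Type*} (rel : I → List Bool × List Bool) :
    Set (FreeLieAlgebra k KGen) :=
  { ⁅FreeLieAlgebra.of k KGen.xh, FreeLieAlgebra.of k KGen.x⁆,
    ⁅FreeLieAlgebra.of k KGen.xh, FreeLieAlgebra.of k KGen.y⁆,
    ⁅FreeLieAlgebra.of k KGen.yh, FreeLieAlgebra.of k KGen.x⁆,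
    ⁅FreeLieAlgebra.of k KGen.yh, FreeLieAlgebra.of k KGen.y⁆,
    ⁅FreeLieAlgebra.of k KGen.xh, FreeLieAlgebra.of k KGen.z⁆ +
      ⁅FreeLieAlgebra.of k KGen.z, FreeLieAlgebra.of k KGen.x⁆,
    ⁅FreeLieAlgebra.of k KGen.yh, FreeLieAlgebra.of k KGen.z⁆ +
      ⁅FreeLieAlgebra.of k KGen.z, FreeLieAlgebra.of k KGen.y⁆ } ∪
  { p | ∃ i : I, p = lnb (letterF k) (FreeLieAlgebra.of k KGen.z) (rel i).1 -
                  lnb (letterF k) (FreeLieAlgebra.of k KGen.z) (rel i).2 }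

/-- The Lie ideal generated by the Kukin relations. -/
noncomputable def kukinIdeal (k : Type*) [Field k] {I : Type*}
    (rel : I → List Bool × List Bool) : LieIdeal k (FreeLieAlgebra k KGen) :=
  LieSubmodule.lieSpan k _ (kukinRels k rel)

/-- The Kukin Lie algebra `A_P`. -/
abbrev KukinAlg (k : Type*) [Field k] {I : Type*} (rel : I → List Bool × List Bool) :=
  FreeLieAlgebra k KGen ⧸ kukinIdeal k rel

/-- The canonical image of an element of the free Lie algebra in `A_P`. -/
noncomputable def kmk (k : Type*) [Field k] {I : Type*} (rel : I → List Bool × List Bool)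
    (a : FreeLieAlgebra k KGen) : KukinAlg k rel :=
  LieSubmodule.Quotient.mk (N := kukinIdeal k rel) a

/-- The congruence on the free semigroup `{x,y}⁺` generated by the defining
pairs `(uᵢ, vᵢ)`: `SemigroupEq rel u v` means `u = v` holds in the semigroup
`P = ⟨x, y ∣ uᵢ = vᵢ (i ∈ I)⟩`. -/
inductive SemigroupEq {I : Type*} (rel : I → List Bool × List Bool) :
    List Bool → List Bool → Prop
  | rel (a b : List Bool) (i : I) :
      SemigroupEq rel (a ++ (rel i).1 ++ b) (a ++ (rel i).2 ++ b)
  | refl (u : List Bool) : SemigroupEq rel u u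
  | symm {u v : List Bool} : SemigroupEq rel u v → SemigroupEq rel v u
  | trans {u v w : List Bool} :
      SemigroupEq rel u v → SemigroupEq rel v w → SemigroupEq rel u w

section Aux

variable {L : Type*} [LieRing L]

theorem lnb_append (f : Bool → L) (z : L) (w₁ w₂ : List Bool) :
    lnb f z (w₁ ++ w₂) = lnb f (lnb f z w₁) w₂ := by
  induction w₁ generalizing z with
  | nil => rfl
  | cons a w ih => simp [lnb, ih]

theorem lnb_neg (f : Bool → L) (z : L) (w : List Bool) :
    lnb f (-z) w = -lnb f z w := by
  induction w generalizing z with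
  | nil => rfl
  | cons a w ih => simp only [lnb, neg_lie, ih]

theorem hat_lnb (φ hg : Bool → L) (h0 : ∀ b c, ⁅hg b, φ c⁆ = 0)
    (b : Bool) (c : L) (w : List Bool) :
    ⁅hg b, lnb φ c w⁆ = lnb φ ⁅hg b, c⁆ w := by
  induction w generalizing c with
  | nil => rfl
  | cons a w ih =>
    simp only [lnb, ih]
    congr 1
    rw [leibniz_lie, h0, lie_zero, add_zero]

theorem lnb_cons_eq (φ hg : Bool → L) (Z : L)
    (h0 : ∀ b c, ⁅hg b, φ c⁆ = 0) (hz : ∀ b, ⁅hg b, Z⁆ = -⁅Z, φ b⁆)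
    (b : Bool) (w : List Bool) :
    lnb φ Z (b :: w) = -⁅hg b, lnb φ Z w⁆ := by
  rw [hat_lnb φ hg h0, hz, lnb_neg, neg_neg]
  rfl

theorem lnb_prefix (φ hg : Bool → L) (Z : L)
    (h0 : ∀ b c, ⁅hg b, φ c⁆ = 0) (hz : ∀ b, ⁅hg b, Z⁆ = -⁅Z, φ b⁆)
    (a : List Bool) {u v : List Bool} (h : lnb φ Z u = lnb φ Z v) :
    lnb φ Z (a ++ u) = lnb φ Z (a ++ v) := by
  induction a with
  | nil => exact h
  | cons c a ih =>
    rw [List.cons_append, List.cons_append, lnb_cons_eq φ hg Z h0 hz,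
      lnb_cons_eq φ hg Z h0 hz, ih]

end Aux

/-- If `u = v` in the semigroup `P`, then `⌊z u⌋ = ⌊z v⌋` in the Kukin Lie
algebra `A_P`. -/
theorem kukin_of_semigroupEq (k : Type*) [Field k] {I : Type*}
    (rel : I → List Bool × List Bool)
    (hrel : ∀ i : I, (rel i).1 ≠ [] ∧ (rel i).2 ≠ [])
    (u v : List Bool) (h : SemigroupEq rel u v) :
    kmk k rel (lnb (letterF k) (FreeLieAlgebra.of k KGen.z) u) =
      kmk k rel (lnb (letterF k) (FreeLieAlgebra.of k KGen.z) v) := by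
  classical
  set φ : Bool → KukinAlg k rel := fun b => kmk k rel (letterF k b) with hφ
  set hg : Bool → KukinAlg k rel := fun b => kmk k rel (hatF k b) with hhg
  set Z : KukinAlg k rel := kmk k rel (FreeLieAlgebra.of k KGen.z) with hZ
  have hzero : ∀ r ∈ kukinRels k rel, kmk k rel r = 0 := by
    intro r hr
    exact (LieSubmodule.Quotient.mk_eq_zero').mpr (LieSubmodule.subset_lieSpan hr)
  have hbr : ∀ a b : FreeLieAlgebra k KGen,
      kmk k rel ⁅a, b⁆ = ⁅kmk k rel a, kmk k rel b⁆ := fun a b => rfl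
  have hkmk_lnb : ∀ (w : List Bool) (z : FreeLieAlgebra k KGen),
      kmk k rel (lnb (letterF k) z w) = lnb φ (kmk k rel z) w := by
    intro w
    induction w with
    | nil => intro z; rfl
    | cons a w ih => intro z; simp only [lnb, ih, hbr]; rfl
  have h0 : ∀ b c, ⁅hg b, φ c⁆ = 0 := by
    intro b c
    refine (hbr (hatF k b) (letterF k c)).symm.trans (hzero _ ?_)
    cases b <;> cases c <;>
      refine Set.mem_union_left _ ?_ <;> simp [letterF, hatF]
  have hz : ∀ b, ⁅hg b, Z⁆ = -⁅Z, φ b⁆ := by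
    intro b
    have : kmk k rel (⁅hatF k b, FreeLieAlgebra.of k KGen.z⁆ +
        ⁅FreeLieAlgebra.of k KGen.z, letterF k b⁆) = 0 := by
      apply hzero
      cases b <;> exact Set.mem_union_left _ (by simp [letterF, hatF])
    rw [show kmk k rel (⁅hatF k b, FreeLieAlgebra.of k KGen.z⁆ +
        ⁅FreeLieAlgebra.of k KGen.z, letterF k b⁆) =
        ⁅hg b, Z⁆ + ⁅Z, φ b⁆ from rfl] at this
    exact eq_neg_of_add_eq_zero_left this
  have hrelq : ∀ i : I, lnb φ Z (rel i).1 = lnb φ Z (rel i).2 := by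
    intro i
    have hm : kmk k rel (lnb (letterF k) (FreeLieAlgebra.of k KGen.z) (rel i).1 -
        lnb (letterF k) (FreeLieAlgebra.of k KGen.z) (rel i).2) = 0 := by
      apply hzero
      exact Set.mem_union_right _ ⟨i, rfl⟩
    rw [show kmk k rel (lnb (letterF k) (FreeLieAlgebra.of k KGen.z) (rel i).1 -
        lnb (letterF k) (FreeLieAlgebra.of k KGen.z) (rel i).2) =
        kmk k rel (lnb (letterF k) (FreeLieAlgebra.of k KGen.z) (rel i).1) -
        kmk k rel (lnb (letterF k) (FreeLieAlgebra.of k KGen.z) (rel i).2) from rfl,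
      sub_eq_zero, hkmk_lnb, hkmk_lnb] at hm
    exact hm
  rw [hkmk_lnb, hkmk_lnb, ← hZ]
  induction h with
  | rel a b i =>
    calc lnb φ Z (a ++ (rel i).1 ++ b)
        = lnb φ (lnb φ Z (a ++ (rel i).1)) b := lnb_append _ _ _ _
      _ = lnb φ (lnb φ Z (a ++ (rel i).2)) b := by
          rw [lnb_prefix φ hg Z h0 hz a (hrelq i)]
      _ = lnb φ Z (a ++ (rel i).2 ++ b) := (lnb_append _ _ _ _).symm
  | refl u => rfl
  | symm _ ih => exact ih.symm
  | trans _ _ ih1 ih2 => exact ih1.trans ih2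
end

section
/- In the Kukin Lie algebra A_P, the relations ⌊z u⌋ = ⌊z v⌋ hold for every pair (u,v) in the full semigroup congruence ρ generated by {(uᵢ,vᵢ) : i ∈ I}, not only for the defining pairs. -/
/-- Appending on the right composes left-normed bracketings. -/
lemma lnb_append_s13 {L : Type*} [LieRing L] (f : Bool → L) :
    ∀ (u v : List Bool) (c : L), lnb f c (u ++ v) = lnb f (lnb f c u) v
  | [], v, c => rfl
  | a :: u, v, c => by simp [lnb, lnb_append_s13 f u v]

/-- If `H` commutes with all letters, it can be pulled out of a left-normed
bracketing. -/
lemma lnb_bracket_out {L : Type*} [LieRing L] (f : Bool → L) (H : L)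
    (hH : ∀ b, ⁅H, f b⁆ = 0) :
    ∀ (w : List Bool) (c : L), lnb f ⁅c, H⁆ w = ⁅lnb f c w, H⁆
  | [], c => rfl
  | a :: w, c => by
      have : ⁅(⁅c, H⁆ : L), f a⁆ = ⁅⁅c, f a⁆, H⁆ := by
        rw [lie_lie, hH a, lie_zero, zero_sub, ← lie_skew, neg_neg]
      simp only [lnb, this, lnb_bracket_out f H hH w]

section KukinAux

variable (k : Type*) [Field k] {I : Type*} (rel : I → List Bool × List Bool)

lemma kmk_rel_zero {r : FreeLieAlgebra k KGen} (hr : r ∈ kukinRels k rel) :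
    kmk k rel r = 0 :=
  (LieSubmodule.Quotient.mk_eq_zero' (N := kukinIdeal k rel)).2
    (LieSubmodule.subset_lieSpan hr)

lemma kmk_bracket (a b : FreeLieAlgebra k KGen) :
    kmk k rel ⁅a, b⁆ = ⁅kmk k rel a, kmk k rel b⁆ :=
  LieSubmodule.Quotient.mk_bracket (I := kukinIdeal k rel) a b

lemma kmk_lnb : ∀ (w : List Bool) (c : FreeLieAlgebra k KGen),
    kmk k rel (lnb (letterF k) c w) =
      lnb (fun b => kmk k rel (letterF k b)) (kmk k rel c) w
  | [], c => rfl
  | a :: w, c => by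
      simp only [lnb, kmk_lnb w, kmk_bracket]

lemma kmk_add (a b : FreeLieAlgebra k KGen) :
    kmk k rel (a + b) = kmk k rel a + kmk k rel b := rfl

lemma kmk_sub (a b : FreeLieAlgebra k KGen) :
    kmk k rel (a - b) = kmk k rel a - kmk k rel b := rfl

lemma kmk_hat_letter (a b : Bool) :
    ⁅kmk k rel (hatF k a), kmk k rel (letterF k b)⁆ = 0 := by
  rw [← kmk_bracket]
  apply kmk_rel_zero
  cases a <;> cases b <;>
    · left
      simp [hatF, letterF, kukinRels, Set.mem_insert_iff]

lemma kmk_z_letter (a : Bool) :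
    ⁅kmk k rel (FreeLieAlgebra.of k KGen.z), kmk k rel (letterF k a)⁆ =
      ⁅kmk k rel (FreeLieAlgebra.of k KGen.z), kmk k rel (hatF k a)⁆ := by
  have h0 : kmk k rel (⁅hatF k a, FreeLieAlgebra.of k KGen.z⁆ +
      ⁅FreeLieAlgebra.of k KGen.z, letterF k a⁆) = 0 := by
    apply kmk_rel_zero
    cases a <;>
      · left
        simp [hatF, letterF, kukinRels, Set.mem_insert_iff]
  rw [kmk_add, kmk_bracket, kmk_bracket, add_eq_zero_iff_eq_neg] at h0
  rw [← lie_skew (kmk k rel (FreeLieAlgebra.of k KGen.z)) (kmk k rel (hatF k a)), h0, neg_neg]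

/-- Prepending a letter amounts to bracketing with the hatted generator. -/
lemma kmk_lnb_cons (a : Bool) (w : List Bool) :
    lnb (fun b => kmk k rel (letterF k b))
        (kmk k rel (FreeLieAlgebra.of k KGen.z)) (a :: w) =
      ⁅lnb (fun b => kmk k rel (letterF k b))
        (kmk k rel (FreeLieAlgebra.of k KGen.z)) w, kmk k rel (hatF k a)⁆ := by
  show lnb _ ⁅kmk k rel (FreeLieAlgebra.of k KGen.z), kmk k rel (letterF k a)⁆ w = _
  rw [kmk_z_letter]
  exact lnb_bracket_out _ _ (fun b => kmk_hat_letter k rel a b) w _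

lemma kmk_lnb_prepend : ∀ (a : List Bool) {u v : List Bool},
    lnb (fun b => kmk k rel (letterF k b))
        (kmk k rel (FreeLieAlgebra.of k KGen.z)) u =
      lnb (fun b => kmk k rel (letterF k b))
        (kmk k rel (FreeLieAlgebra.of k KGen.z)) v →
    lnb (fun b => kmk k rel (letterF k b))
        (kmk k rel (FreeLieAlgebra.of k KGen.z)) (a ++ u) =
      lnb (fun b => kmk k rel (letterF k b))
        (kmk k rel (FreeLieAlgebra.of k KGen.z)) (a ++ v)
  | [], _, _, h => h
  | c :: a, u, v, h => by
      rw [List.cons_append, List.cons_append, kmk_lnb_cons, kmk_lnb_cons,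
        kmk_lnb_prepend a h]

end KukinAux

/-- The relations `⌊z u⌋ = ⌊z v⌋` hold in `A_P` for every pair `(u, v)` in the
full semigroup congruence generated by `{(uᵢ, vᵢ) : i ∈ I}`, not only for the
defining pairs. -/
theorem kukin_rels_for_congruence (k : Type*) [Field k] {I : Type*}
    (rel : I → List Bool × List Bool)
    (hrel : ∀ i : I, (rel i).1 ≠ [] ∧ (rel i).2 ≠ []) :
    ∀ u v : List Bool, SemigroupEq rel u v →
      kmk k rel (lnb (letterF k) (FreeLieAlgebra.of k KGen.z) u) =
        kmk k rel (lnb (letterF k) (FreeLieAlgebra.of k KGen.z) v) := by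
  intro u v h
  rw [kmk_lnb, kmk_lnb]
  induction h with
  | refl u => rfl
  | symm _ ih => exact ih.symm
  | trans _ _ ih1 ih2 => exact ih1.trans ih2
  | rel a b i =>
      have hbase : lnb (fun c => kmk k rel (letterF k c))
          (kmk k rel (FreeLieAlgebra.of k KGen.z)) (rel i).1 =
            lnb (fun c => kmk k rel (letterF k c))
          (kmk k rel (FreeLieAlgebra.of k KGen.z)) (rel i).2 := by
        rw [← kmk_lnb, ← kmk_lnb]
        have h0 : kmk k rel (lnb (letterF k) (FreeLieAlgebra.of k KGen.z) (rel i).1 -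
            lnb (letterF k) (FreeLieAlgebra.of k KGen.z) (rel i).2) = 0 :=
          kmk_rel_zero k rel (Or.inr ⟨i, rfl⟩)
        rw [kmk_sub, sub_eq_zero] at h0
        exact h0
      rw [List.append_assoc, List.append_assoc]
      exact kmk_lnb_prepend k rel a (by rw [lnb_append_s13, lnb_append_s13, hbase])
end

section
/- For words u, v ∈ {x,y}*: u = v in the semigroup P if and only if ⌊z u⌋ = ⌊z v⌋ in the Kukin Lie algebra A_P. Consequently, if P has undecidable word problem then so does A_P. -/
namespace KukinAux

variable {k : Type*} [Field k] {I : Type*} (rel : I → List Bool × List Bool)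

attribute [local instance] LieRing.ofAssociativeRing

/-- Shorthand for the generator `z`. -/
noncomputable abbrev zz (k : Type*) [Field k] : FreeLieAlgebra k KGen :=
  FreeLieAlgebra.of k KGen.z

theorem lnb_append {L : Type*} [LieRing L] (f : Bool → L) (e : L) (s t : List Bool) :
    lnb f e (s ++ t) = lnb f (lnb f e s) t := by
  induction s generalizing e with
  | nil => rfl
  | cons c s ih => exact ih ⁅e, f c⁆

theorem mem_sub_lnb {f : Bool → FreeLieAlgebra k KGen} {e₁ e₂ : FreeLieAlgebra k KGen}
    (h : e₁ - e₂ ∈ kukinIdeal k rel) (w : List Bool) :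
    lnb f e₁ w - lnb f e₂ w ∈ kukinIdeal k rel := by
  induction w generalizing e₁ e₂ with
  | nil => exact h
  | cons c w ih =>
    refine ih ?_
    have : ⁅e₁, f c⁆ - ⁅e₂, f c⁆ = ⁅e₁ - e₂, f c⁆ := by rw [sub_lie]
    rw [this]
    exact lie_mem_left k _ (kukinIdeal k rel) _ _ h

theorem hat_letter_mem (d c : Bool) :
    ⁅hatF k d, letterF k c⁆ ∈ kukinIdeal k rel := by
  refine LieSubmodule.subset_lieSpan ?_
  cases d <;> cases c <;>
    simp [kukinRels, hatF, letterF, Set.mem_insert_iff, Set.mem_union]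

theorem z_letter_hat_mem (c : Bool) :
    ⁅zz k, letterF k c⁆ - ⁅zz k, hatF k c⁆ ∈ kukinIdeal k rel := by
  have h : ⁅hatF k c, zz k⁆ + ⁅zz k, letterF k c⁆ ∈ kukinIdeal k rel := by
    refine LieSubmodule.subset_lieSpan ?_
    cases c <;> simp [kukinRels, hatF, letterF, zz, Set.mem_insert_iff, Set.mem_union]
  have : ⁅zz k, letterF k c⁆ - ⁅zz k, hatF k c⁆ =
      ⁅hatF k c, zz k⁆ + ⁅zz k, letterF k c⁆ := by
    rw [← lie_skew (zz k) (hatF k c)]; abel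
  rw [this]; exact h

theorem rel_elt_mem (i : I) :
    lnb (letterF k) (zz k) (rel i).1 - lnb (letterF k) (zz k) (rel i).2 ∈ kukinIdeal k rel :=
  LieSubmodule.subset_lieSpan (Or.inr ⟨i, rfl⟩)

/-- Lemma B': a single letter can be pushed through a string of hats, mod the ideal. -/
theorem hat_push (h : List Bool) (e : FreeLieAlgebra k KGen) (c : Bool) :
    ⁅lnb (hatF k) e h, letterF k c⁆ - lnb (hatF k) ⁅e, letterF k c⁆ h ∈ kukinIdeal k rel := by
  induction h generalizing e with
  | nil => simp only [lnb, sub_self]; exact (kukinIdeal k rel).zero_mem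
  | cons d h ih =>
    have h1 := ih ⁅e, hatF k d⁆
    have hid : ⁅⁅e, hatF k d⁆, letterF k c⁆ - ⁅⁅e, letterF k c⁆, hatF k d⁆ =
        ⁅e, ⁅hatF k d, letterF k c⁆⁆ := by
      rw [lie_lie, show ⁅⁅e, letterF k c⁆, hatF k d⁆ = -⁅hatF k d, ⁅e, letterF k c⁆⁆ from
        (lie_skew _ _).symm]
      abel
    have h2 : ⁅⁅e, hatF k d⁆, letterF k c⁆ - ⁅⁅e, letterF k c⁆, hatF k d⁆ ∈ kukinIdeal k rel := by
      rw [hid]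
      exact lie_mem_right k _ (kukinIdeal k rel) _ _ (hat_letter_mem rel d c)
    have h3 := mem_sub_lnb rel (f := hatF k) h2 h
    have := add_mem h1 h3
    simpa [lnb, sub_add_sub_cancel] using this

/-- Lemma C': a word of letters can be pushed through a string of hats, mod the ideal. -/
theorem hat_push_word (u : List Bool) (h : List Bool) (e : FreeLieAlgebra k KGen) :
    lnb (letterF k) (lnb (hatF k) e h) u - lnb (hatF k) (lnb (letterF k) e u) h ∈
      kukinIdeal k rel := by
  induction u generalizing e with
  | nil => simp only [lnb, sub_self]; exact (kukinIdeal k rel).zero_mem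
  | cons c u ih =>
    have h1 := mem_sub_lnb rel (f := letterF k) (hat_push rel h e c) u
    have h2 := ih ⁅e, letterF k c⁆
    have := add_mem h1 h2
    simpa [lnb, sub_add_sub_cancel] using this

/-- Lemma G: a prefix of letters can be converted to a suffix of hats, mod the ideal. -/
theorem prefix_to_hats (a w : List Bool) :
    lnb (letterF k) (zz k) (a ++ w) -
      lnb (hatF k) (lnb (letterF k) (zz k) w) a.reverse ∈ kukinIdeal k rel := by
  induction a generalizing w with
  | nil =>
    simp only [List.nil_append, List.reverse_nil, lnb, sub_self]
    exact (kukinIdeal k rel).zero_mem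
  | cons c a ih =>
    have h1 : lnb (letterF k) (zz k) (c :: (a ++ w)) -
        lnb (letterF k) ⁅zz k, hatF k c⁆ (a ++ w) ∈ kukinIdeal k rel := by
      show lnb (letterF k) ⁅zz k, letterF k c⁆ (a ++ w) - _ ∈ _
      exact mem_sub_lnb rel (z_letter_hat_mem rel c) (a ++ w)
    have h2 : lnb (letterF k) ⁅zz k, hatF k c⁆ (a ++ w) -
        ⁅lnb (letterF k) (zz k) (a ++ w), hatF k c⁆ ∈ kukinIdeal k rel := by
      have := hat_push_word rel (a ++ w) [c] (zz k)
      simpa [lnb] using this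
    have h3 : ⁅lnb (letterF k) (zz k) (a ++ w), hatF k c⁆ -
        ⁅lnb (hatF k) (lnb (letterF k) (zz k) w) a.reverse, hatF k c⁆ ∈ kukinIdeal k rel := by
      have : ⁅lnb (letterF k) (zz k) (a ++ w), hatF k c⁆ -
          ⁅lnb (hatF k) (lnb (letterF k) (zz k) w) a.reverse, hatF k c⁆ =
          ⁅lnb (letterF k) (zz k) (a ++ w) -
            lnb (hatF k) (lnb (letterF k) (zz k) w) a.reverse, hatF k c⁆ := by
        rw [sub_lie]
      rw [this]
      exact lie_mem_left k _ (kukinIdeal k rel) _ _ (ih w)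
    have h12 := add_mem h1 h2
    have h123 := add_mem h12 h3
    rw [sub_add_sub_cancel, sub_add_sub_cancel] at h123
    have hrw : lnb (hatF k) (lnb (letterF k) (zz k) w) (c :: a).reverse =
        ⁅lnb (hatF k) (lnb (letterF k) (zz k) w) a.reverse, hatF k c⁆ := by
      rw [List.reverse_cons, lnb_append]
      rfl
    rw [show ((c :: a) ++ w) = c :: (a ++ w) from rfl, hrw]
    exact h123

/-- Forward direction: semigroup equality implies equality mod the Kukin ideal. -/
theorem forward {u v : List Bool} (h : SemigroupEq rel u v) :
    lnb (letterF k) (zz k) u - lnb (letterF k) (zz k) v ∈ kukinIdeal k rel := by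
  induction h with
  | rel a b i =>
    rw [List.append_assoc a _ b, List.append_assoc a _ b]
    have g1 := prefix_to_hats (k := k) rel a ((rel i).1 ++ b)
    have g2 := prefix_to_hats (k := k) rel a ((rel i).2 ++ b)
    have c1 : lnb (letterF k) (zz k) ((rel i).1 ++ b) -
        lnb (letterF k) (zz k) ((rel i).2 ++ b) ∈ kukinIdeal k rel := by
      rw [lnb_append, lnb_append]
      exact mem_sub_lnb rel (rel_elt_mem rel i) b
    have c2 := mem_sub_lnb rel (f := hatF k) c1 a.reverse
    have h12 := add_mem g1 c2
    rw [sub_add_sub_cancel] at h12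
    have h123 := add_mem h12 (neg_mem g2)
    have : lnb (letterF k) (zz k) (a ++ ((rel i).1 ++ b)) -
        lnb (hatF k) (lnb (letterF k) (zz k) ((rel i).2 ++ b)) a.reverse +
        -(lnb (letterF k) (zz k) (a ++ ((rel i).2 ++ b)) -
          lnb (hatF k) (lnb (letterF k) (zz k) ((rel i).2 ++ b)) a.reverse) =
        lnb (letterF k) (zz k) (a ++ ((rel i).1 ++ b)) -
          lnb (letterF k) (zz k) (a ++ ((rel i).2 ++ b)) := by abel
    rwa [this] at h123
  | refl u => simpa using (kukinIdeal k rel).zero_mem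
  | symm h ih => simpa using neg_mem ih
  | trans h1 h2 ih1 ih2 =>
    have := add_mem ih1 ih2
    rwa [sub_add_sub_cancel] at this

theorem kmk_eq_iff (a b : FreeLieAlgebra k KGen) :
    kmk k rel a = kmk k rel b ↔ a - b ∈ kukinIdeal k rel :=
  Submodule.Quotient.eq _

/-! ### The model used for the backward direction -/

/-- The setoid of semigroup equality. -/
def sgSetoid : Setoid (List Bool) :=
  ⟨SemigroupEq rel, ⟨SemigroupEq.refl, SemigroupEq.symm, SemigroupEq.trans⟩⟩

/-- The set of semigroup elements (classes of words). -/
def Q : Type _ := Quotient (sgSetoid rel)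

/-- The class of a word. -/
def mkQ (u : List Bool) : Q rel := Quotient.mk (sgSetoid rel) u

theorem append_congr (c : Bool) {u v : List Bool} (h : SemigroupEq rel u v) :
    SemigroupEq rel (u ++ [c]) (v ++ [c]) := by
  induction h with
  | rel a b i =>
    rw [List.append_assoc (a ++ (rel i).1) b [c], List.append_assoc (a ++ (rel i).2) b [c]]
    exact SemigroupEq.rel a (b ++ [c]) i
  | refl u => exact SemigroupEq.refl _
  | symm _ ih => exact ih.symm
  | trans _ _ ih1 ih2 => exact ih1.trans ih2

theorem prepend_congr (c : Bool) {u v : List Bool} (h : SemigroupEq rel u v) :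
    SemigroupEq rel (c :: u) (c :: v) := by
  induction h with
  | rel a b i => exact SemigroupEq.rel (c :: a) b i
  | refl u => exact SemigroupEq.refl _
  | symm _ ih => exact ih.symm
  | trans _ _ ih1 ih2 => exact ih1.trans ih2

/-- Right multiplication by a letter on classes. -/
def appQ (c : Bool) : Q rel → Q rel :=
  Quotient.map (· ++ [c]) fun _ _ h => append_congr rel c h

/-- Left multiplication by a letter on classes. -/
def preQ (c : Bool) : Q rel → Q rel :=
  Quotient.map (c :: ·) fun _ _ h => prepend_congr rel c h

theorem appQ_mkQ (c : Bool) (u : List Bool) : appQ rel c (mkQ rel u) = mkQ rel (u ++ [c]) := rfl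

theorem preQ_mkQ (c : Bool) (u : List Bool) : preQ rel c (mkQ rel u) = mkQ rel (c :: u) := rfl

theorem appQ_preQ (c d : Bool) (q : Q rel) : appQ rel c (preQ rel d q) = preQ rel d (appQ rel c q) :=
  Quotient.inductionOn q fun _ => rfl

/-- The module on which the model acts: basis `w₀` (at `none`) together with
basis vectors `z_q` for classes `q`. -/
abbrev W (k : Type*) [Field k] {I : Type*} (rel : I → List Bool × List Bool) : Type _ :=
  Option (Q rel) →₀ k

/-- The operator corresponding to the letter `c` (acting as `z_q ↦ -z_{q·c}`). -/
noncomputable def Xop (c : Bool) : Module.End k (W k rel) :=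
  Finsupp.lift (W k rel) k (Option (Q rel)) fun o =>
    match o with
    | none => 0
    | some q => -Finsupp.single (some (appQ rel c q)) 1

/-- The operator corresponding to the hatted letter `c` (acting as `z_q ↦ -z_{c·q}`). -/
noncomputable def Hop (c : Bool) : Module.End k (W k rel) :=
  Finsupp.lift (W k rel) k (Option (Q rel)) fun o =>
    match o with
    | none => 0
    | some q => -Finsupp.single (some (preQ rel c q)) 1

/-- The operator corresponding to `z` (sending `w₀` to `z_{[ε]}`, killing the rest). -/
noncomputable def Zop : Module.End k (W k rel) :=
  Finsupp.lift (W k rel) k (Option (Q rel)) fun o =>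
    match o with
    | none => Finsupp.single (some (mkQ rel [])) 1
    | some _ => 0

theorem lift_single {X M : Type*} [AddCommMonoid M] [Module k M] (f : X → M) (a : X) (b : k) :
    Finsupp.lift M k X f (Finsupp.single a b) = b • f a := by
  simp [Finsupp.lift_apply, Finsupp.sum_single_index]

variable (k)

theorem Xop_single_none (c : Bool) (b : k) :
    Xop (k := k) rel c (Finsupp.single none b) = 0 := by
  simp [Xop, lift_single]

theorem Xop_single_some (c : Bool) (q : Q rel) (b : k) :
    Xop (k := k) rel c (Finsupp.single (some q) b) =
      -(b • Finsupp.single (some (appQ rel c q)) (1 : k)) := by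
  simp [Xop, lift_single]

theorem Hop_single_none (c : Bool) (b : k) :
    Hop (k := k) rel c (Finsupp.single none b) = 0 := by
  simp [Hop, lift_single]

theorem Hop_single_some (c : Bool) (q : Q rel) (b : k) :
    Hop (k := k) rel c (Finsupp.single (some q) b) =
      -(b • Finsupp.single (some (preQ rel c q)) (1 : k)) := by
  simp [Hop, lift_single]

theorem Zop_single_none (b : k) :
    Zop (k := k) rel (Finsupp.single none b) = b • Finsupp.single (some (mkQ rel [])) (1 : k) := by
  simp [Zop, lift_single]

theorem Zop_single_some (q : Q rel) (b : k) :
    Zop (k := k) rel (Finsupp.single (some q) b) = 0 := by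
  simp [Zop, lift_single]

theorem bracket_end_apply (A B : Module.End k (W k rel)) (v : W k rel) :
    ⁅A, B⁆ v = A (B v) - B (A v) := by
  simp [Ring.lie_def, LinearMap.sub_apply, Module.End.mul_apply]

theorem Hop_Xop_comm (d c : Bool) : ⁅Hop (k := k) rel d, Xop (k := k) rel c⁆ = 0 := by
  refine Finsupp.lhom_ext fun a b => ?_
  rw [bracket_end_apply]
  cases a with
  | none =>
    simp [Xop_single_none, Hop_single_none]
  | some q =>
    rw [Xop_single_some, Hop_single_some]
    simp only [map_neg, map_smul, Hop_single_some, Xop_single_some, appQ_preQ]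
    simp

theorem HZ_rel (c : Bool) :
    ⁅Hop (k := k) rel c, Zop (k := k) rel⁆ + ⁅Zop (k := k) rel, Xop (k := k) rel c⁆ = 0 := by
  refine Finsupp.lhom_ext fun a b => ?_
  rw [LinearMap.add_apply, bracket_end_apply, bracket_end_apply]
  cases a with
  | none =>
    rw [Zop_single_none, Xop_single_none, Hop_single_none]
    simp only [map_smul, map_neg, map_zero, Hop_single_some, Xop_single_some]
    have : preQ rel c (mkQ rel []) = appQ rel c (mkQ rel []) := rfl
    rw [this]
    simp
  | some q =>
    rw [Zop_single_some, Xop_single_some, Hop_single_some]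
    simp only [map_smul, map_neg, map_zero, Zop_single_some]
    simp

/-- The key invariant: the operator sends `w₀` to `z_q` and kills all `z_{q'}`. -/
def goodOp (q : Q rel) (E : Module.End k (W k rel)) : Prop :=
  E (Finsupp.single none 1) = Finsupp.single (some q) 1 ∧
    ∀ q' : Q rel, E (Finsupp.single (some q') 1) = 0

theorem goodOp_bracket (c : Bool) (q : Q rel) (E : Module.End k (W k rel))
    (h : goodOp k rel q E) : goodOp k rel (appQ rel c q) ⁅E, Xop (k := k) rel c⁆ := by
  constructor
  · rw [bracket_end_apply, Xop_single_none, h.1, Xop_single_some, map_zero]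
    simp
  · intro q'
    rw [bracket_end_apply, Xop_single_some, h.2 q', map_zero, map_neg, map_smul, h.2]
    simp

theorem goodOp_unique {q : Q rel} {E E' : Module.End k (W k rel)}
    (h : goodOp k rel q E) (h' : goodOp k rel q E') : E = E' := by
  refine Finsupp.lhom_ext fun a b => ?_
  have hb : (Finsupp.single a b : W k rel) = b • Finsupp.single a 1 := by
    rw [Finsupp.smul_single, smul_eq_mul, mul_one]
  rw [hb, map_smul, map_smul]
  cases a with
  | none => rw [h.1, h'.1]
  | some q' => rw [h.2, h'.2]

theorem goodOp_lnb (w : List Bool) :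
    ∀ (u : List Bool) (E : Module.End k (W k rel)), goodOp k rel (mkQ rel u) E →
      goodOp k rel (mkQ rel (u ++ w)) (lnb (Xop (k := k) rel) E w) := by
  induction w with
  | nil => intro u E h; simpa [lnb] using h
  | cons c w ih =>
    intro u E h
    have h1 := goodOp_bracket k rel c (mkQ rel u) E h
    rw [appQ_mkQ] at h1
    have h2 := ih (u ++ [c]) _ h1
    rw [List.append_assoc] at h2
    simpa [lnb] using h2

theorem goodOp_Zop : goodOp k rel (mkQ rel []) (Zop (k := k) rel) := by
  constructor
  · rw [Zop_single_none]; simp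
  · intro q'; rw [Zop_single_some]

theorem goodOp_lnb_Zop (w : List Bool) :
    goodOp k rel (mkQ rel w) (lnb (Xop (k := k) rel) (Zop (k := k) rel) w) := by
  have := goodOp_lnb k rel w [] _ (goodOp_Zop k rel)
  simpa using this

/-- The model morphism from the free Lie algebra to endomorphisms of `W`. -/
noncomputable def phi : FreeLieAlgebra k KGen →ₗ⁅k⁆ Module.End k (W k rel) :=
  FreeLieAlgebra.lift k fun g =>
    match g with
    | KGen.x => Xop (k := k) rel false
    | KGen.y => Xop (k := k) rel true
    | KGen.xh => Hop (k := k) rel false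
    | KGen.yh => Hop (k := k) rel true
    | KGen.z => Zop (k := k) rel

theorem phi_letter (c : Bool) : phi k rel (letterF k c) = Xop (k := k) rel c := by
  cases c <;> simp [phi, letterF, FreeLieAlgebra.lift_of_apply]

theorem phi_hat (c : Bool) : phi k rel (hatF k c) = Hop (k := k) rel c := by
  cases c <;> simp [phi, hatF, FreeLieAlgebra.lift_of_apply]

theorem phi_z : phi k rel (zz k) = Zop (k := k) rel := by
  simp [phi, zz, FreeLieAlgebra.lift_of_apply]

theorem phi_lnb (e : FreeLieAlgebra k KGen) (w : List Bool) :
    phi k rel (lnb (letterF k) e w) = lnb (Xop (k := k) rel) (phi k rel e) w := by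
  induction w generalizing e with
  | nil => rfl
  | cons c w ih =>
    have : phi k rel ⁅e, letterF k c⁆ = ⁅phi k rel e, Xop (k := k) rel c⁆ := by
      rw [LieHom.map_lie, phi_letter]
    simpa [lnb, this] using ih ⁅e, letterF k c⁆

theorem phi_rels : ∀ r ∈ kukinRels k rel, phi k rel r = 0 := by
  intro r hr
  rcases hr with hr | hr
  · have px : phi k rel (FreeLieAlgebra.of k KGen.x) = Xop (k := k) rel false :=
      FreeLieAlgebra.lift_of_apply _ _
    have py : phi k rel (FreeLieAlgebra.of k KGen.y) = Xop (k := k) rel true :=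
      FreeLieAlgebra.lift_of_apply _ _
    have pxh : phi k rel (FreeLieAlgebra.of k KGen.xh) = Hop (k := k) rel false :=
      FreeLieAlgebra.lift_of_apply _ _
    have pyh : phi k rel (FreeLieAlgebra.of k KGen.yh) = Hop (k := k) rel true :=
      FreeLieAlgebra.lift_of_apply _ _
    have pz : phi k rel (FreeLieAlgebra.of k KGen.z) = Zop (k := k) rel :=
      FreeLieAlgebra.lift_of_apply _ _
    simp only [Set.mem_insert_iff, Set.mem_singleton_iff] at hr
    rcases hr with h | h | h | h | h | h <;> subst h <;>
      first
        | (rw [LieHom.map_lie, pxh, px]; exact Hop_Xop_comm k rel _ _)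
        | (rw [LieHom.map_lie, pxh, py]; exact Hop_Xop_comm k rel _ _)
        | (rw [LieHom.map_lie, pyh, px]; exact Hop_Xop_comm k rel _ _)
        | (rw [LieHom.map_lie, pyh, py]; exact Hop_Xop_comm k rel _ _)
        | (rw [map_add, LieHom.map_lie, LieHom.map_lie, pxh, px, pz];
           exact HZ_rel k rel _)
        | (rw [map_add, LieHom.map_lie, LieHom.map_lie, pyh, py, pz];
           exact HZ_rel k rel _)
  · obtain ⟨i, hi⟩ := hr
    subst hi
    rw [map_sub, phi_lnb, phi_lnb, phi_z]
    have h1 := goodOp_lnb_Zop k rel (rel i).1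
    have h2 := goodOp_lnb_Zop k rel (rel i).2
    have heq : mkQ rel (rel i).1 = mkQ rel (rel i).2 := by
      refine Quotient.sound ?_
      have := SemigroupEq.rel (rel := rel) [] [] i
      exact (by simpa using this : SemigroupEq rel (rel i).1 (rel i).2)
    rw [heq] at h1
    rw [goodOp_unique k rel h1 h2, sub_self]

theorem ideal_le_ker : kukinIdeal k rel ≤ (phi k rel).ker := by
  rw [kukinIdeal, LieSubmodule.lieSpan_le]
  intro r hr
  exact LieHom.mem_ker.mpr (phi_rels k rel r hr)

/-- Backward direction: equality mod the Kukin ideal implies semigroup equality. -/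
theorem backward {u v : List Bool}
    (h : lnb (letterF k) (zz k) u - lnb (letterF k) (zz k) v ∈ kukinIdeal k rel) :
    SemigroupEq rel u v := by
  have h0 : phi k rel (lnb (letterF k) (zz k) u - lnb (letterF k) (zz k) v) = 0 :=
    LieHom.mem_ker.mp (ideal_le_ker k rel h)
  rw [map_sub, sub_eq_zero, phi_lnb, phi_lnb, phi_z] at h0
  have h1 := goodOp_lnb_Zop k rel u
  have h2 := goodOp_lnb_Zop k rel v
  rw [h0] at h1
  have h3 : Finsupp.single (some (mkQ rel u)) (1 : k) =
      Finsupp.single (some (mkQ rel v)) (1 : k) := by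
    rw [← h1.1, ← h2.1]
  have h4 : (some (mkQ rel u) : Option (Q rel)) = some (mkQ rel v) :=
    Finsupp.single_left_injective one_ne_zero h3
  exact Quotient.exact (Option.some.inj h4)

end KukinAux

/-- Kukin's theorem: `u = v` in the semigroup `P` iff `⌊z u⌋ = ⌊z v⌋` in the
Kukin Lie algebra `A_P`. Consequently, if the word problem of `P` is
undecidable, then so is the word problem of `A_P` (on the elements `⌊z u⌋`). -/
theorem kukin_iff_and_undecidability (k : Type*) [Field k] {I : Type*}
    (rel : I → List Bool × List Bool)
    (hrel : ∀ i : I, (rel i).1 ≠ [] ∧ (rel i).2 ≠ []) :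
    (∀ u v : List Bool, SemigroupEq rel u v ↔
      kmk k rel (lnb (letterF k) (FreeLieAlgebra.of k KGen.z) u) =
        kmk k rel (lnb (letterF k) (FreeLieAlgebra.of k KGen.z) v)) ∧
    ((¬ ∃ f : List Bool → List Bool → Bool,
        ∀ u v : List Bool, f u v = true ↔ SemigroupEq rel u v) →
      ¬ ∃ g : List Bool → List Bool → Bool,
        ∀ u v : List Bool, g u v = true ↔
          kmk k rel (lnb (letterF k) (FreeLieAlgebra.of k KGen.z) u) =
            kmk k rel (lnb (letterF k) (FreeLieAlgebra.of k KGen.z) v)) := by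
  have main : ∀ u v : List Bool, SemigroupEq rel u v ↔
      kmk k rel (lnb (letterF k) (FreeLieAlgebra.of k KGen.z) u) =
        kmk k rel (lnb (letterF k) (FreeLieAlgebra.of k KGen.z) v) := by
    intro u v
    rw [KukinAux.kmk_eq_iff]
    exact ⟨fun h => KukinAux.forward (k := k) rel h, fun h => KukinAux.backward k rel h⟩
  refine ⟨main, fun hund hg => hund ?_⟩
  obtain ⟨g, hgspec⟩ := hg
  exact ⟨g, fun u v => (hgspec u v).trans (main u v).symm⟩
end

section
/- In the Kukin Lie algebra A_P, the subalgebra generated by x̂ and ŷ commutes elementwise with the subalgebra generated by x and y: every bracket of a Lie word in {x̂, ŷ} with a Lie word in {x, y} vanishes. -/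
/-- Centralizer of an element as a Lie subalgebra. -/
def centElem (k : Type*) {L : Type*} [CommRing k] [LieRing L] [LieAlgebra k L] (a : L) :
    LieSubalgebra k L where
  carrier := {b | ⁅a, b⁆ = 0}
  add_mem' := by intro p q hp hq; simp_all [lie_add]
  zero_mem' := by simp
  smul_mem' := by intro c p hp; simp_all
  lie_mem' := by
    intro p q hp hq
    simp only [Set.mem_setOf_eq] at *
    rw [leibniz_lie, hp, hq]; simp

/-- Elements commuting with everything in a set `s`, as a Lie subalgebra. -/
def centSet (k : Type*) {L : Type*} [CommRing k] [LieRing L] [LieAlgebra k L] (s : Set L) :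
    LieSubalgebra k L where
  carrier := {a | ∀ b ∈ s, ⁅a, b⁆ = 0}
  add_mem' := by intro p q hp hq b hb; simp [add_lie, hp b hb, hq b hb]
  zero_mem' := by intro b hb; simp
  smul_mem' := by intro c p hp b hb; simp [hp b hb]
  lie_mem' := by
    intro p q hp hq b hb
    rw [lie_lie, hp b hb, hq b hb]; simp
/-- In `A_P`, the subalgebra generated by `x̂, ŷ` commutes elementwise with the
subalgebra generated by `x, y`. -/
theorem kukin_hatted_commutes (k : Type*) [Field k] {I : Type*}
    (rel : I → List Bool × List Bool) :
    ∀ a ∈ LieSubalgebra.lieSpan k (KukinAlg k rel)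
        {kmk k rel (FreeLieAlgebra.of k KGen.xh), kmk k rel (FreeLieAlgebra.of k KGen.yh)},
      ∀ b ∈ LieSubalgebra.lieSpan k (KukinAlg k rel)
        {kmk k rel (FreeLieAlgebra.of k KGen.x), kmk k rel (FreeLieAlgebra.of k KGen.y)},
        ⁅a, b⁆ = 0 := by
  set T : Set (KukinAlg k rel) :=
    {kmk k rel (FreeLieAlgebra.of k KGen.x), kmk k rel (FreeLieAlgebra.of k KGen.y)}
  -- basic vanishing brackets
  have key : ∀ g h : KGen,
      ⁅FreeLieAlgebra.of k g, FreeLieAlgebra.of k h⁆ ∈ kukinRels k rel →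
      ⁅kmk k rel (FreeLieAlgebra.of k g), kmk k rel (FreeLieAlgebra.of k h)⁆ = 0 := by
    intro g h hmem
    have : kmk k rel ⁅FreeLieAlgebra.of k g, FreeLieAlgebra.of k h⁆ = 0 := by
      rw [kmk, LieSubmodule.Quotient.mk_eq_zero']
      exact LieSubmodule.subset_lieSpan hmem
    rwa [kmk, LieSubmodule.Quotient.mk_bracket] at this
  have hxx : ∀ g ∈ ({KGen.xh, KGen.yh} : Set KGen), ∀ h ∈ ({KGen.x, KGen.y} : Set KGen),
      ⁅kmk k rel (FreeLieAlgebra.of k g), kmk k rel (FreeLieAlgebra.of k h)⁆ = 0 := by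
    rintro g (rfl|rfl) h (rfl|rfl) <;>
      exact key _ _ (Or.inl (by simp [kukinRels]))
  intro a ha b hb
  -- first: generators xh, yh commute with all of span T
  have step1 : ∀ g ∈ ({KGen.xh, KGen.yh} : Set KGen), ∀ c ∈ LieSubalgebra.lieSpan k _ T,
      ⁅kmk k rel (FreeLieAlgebra.of k g), c⁆ = 0 := by
    intro g hg c hc
    have : LieSubalgebra.lieSpan k (KukinAlg k rel) T ≤
        centElem k (kmk k rel (FreeLieAlgebra.of k g)) := by
      rw [LieSubalgebra.lieSpan_le]
      rintro t (rfl|rfl)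
      · exact hxx g hg KGen.x (Or.inl rfl)
      · exact hxx g hg KGen.y (Or.inr rfl)
    exact this hc
  have step2 : LieSubalgebra.lieSpan k (KukinAlg k rel)
      {kmk k rel (FreeLieAlgebra.of k KGen.xh), kmk k rel (FreeLieAlgebra.of k KGen.yh)} ≤
      centSet k {c | c ∈ LieSubalgebra.lieSpan k (KukinAlg k rel) T} := by
    rw [LieSubalgebra.lieSpan_le]
    rintro t (rfl|rfl) c hc
    · exact step1 KGen.xh (Or.inl rfl) c hc
    · exact step1 KGen.yh (Or.inr rfl) c hc
  exact step2 ha b hb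
end

section
/- In the free Lie algebra on a linearly ordered set X, viewed inside the free associative algebra k⟨X⟩, the leading monomial (with respect to the deg-lex order) of the standard bracketing [w] of an associative Lyndon-Shirshov word w is w itself, with coefficient 1. -/
/-- Deg-lex order: compare by length first, then by `lexGT`. -/
def degLexGT {X : Type*} [LinearOrder X] (u v : List X) : Prop :=
  v.length < u.length ∨ (u.length = v.length ∧ lexGT u v)

/-- `IsLynBracket k w f` : `f` is the standard (Shirshov) bracketing `[w]` of the
ALSW `w`, viewed inside the free associative algebra via `[a,b] = ab - ba`.
For `|w| ≥ 2` one has `[w] = [[u],[v]]`, where `v` is the longest proper ALSW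
suffix of `w`. -/
inductive IsLynBracket (k : Type*) [Field k] {X : Type*} [LinearOrder X] :
    List X → FreeAlgebra k X → Prop
  | single (a : X) : IsLynBracket k [a] (FreeAlgebra.ι k a)
  | node (u v : List X) (fu fv : FreeAlgebra k X) :
      IsLynBracket k u fu → IsLynBracket k v fv →
      IsALSW (u ++ v) → u ≠ [] → IsALSW v →
      (∀ v' : List X, v' <:+ u ++ v → v' ≠ u ++ v → IsALSW v' → v'.length ≤ v.length) →
      IsLynBracket k (u ++ v) (fu * fv - fv * fu)

/-- The coefficient of the word `w` in an element of the free associative algebra. -/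
noncomputable def coeffOf (k : Type*) [Field k] {X : Type*}
    (f : FreeAlgebra k X) (w : List X) : k :=
  (FreeAlgebra.equivMonoidAlgebraFreeMonoid (R := k) (X := X) f).coeff (FreeMonoid.ofList w)

set_option linter.unusedVariables false
set_option linter.unusedSectionVars false

section LexLemmas
variable {X : Type*} [LinearOrder X]

lemma not_lexGT_nil : ∀ (u : List X), ¬ lexGT u [] := fun u => by cases u <;> simp [lexGT]

lemma lexGT_nil_iff : ∀ (v : List X), lexGT [] v ↔ v ≠ [] := by
  rintro (_ | ⟨b, v⟩) <;> simp [lexGT]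

lemma lexGT_cons_iff {a b : X} {u v : List X} :
    lexGT (a :: u) (b :: v) ↔ b < a ∨ (a = b ∧ lexGT u v) := by simp [lexGT]

lemma lexGT_irrefl : ∀ (w : List X), ¬ lexGT w w
  | [] => by simp [lexGT]
  | a :: u => by simp [lexGT, lexGT_irrefl u]

lemma lexGT_trans : ∀ (a b c : List X), lexGT a b → lexGT b c → lexGT a c
  | _, b, [], _, h2 => absurd h2 (not_lexGT_nil _)
  | [], b, c :: cs, _, _ => (lexGT_nil_iff _).mpr (by simp)
  | a :: as, [], c, h1, _ => absurd h1 (not_lexGT_nil _)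
  | a :: as, b :: bs, c :: cs, h1, h2 => by
      rw [lexGT_cons_iff] at *
      rcases h1 with h1 | ⟨rfl, h1⟩ <;> rcases h2 with h2 | ⟨rfl, h2⟩
      · exact Or.inl (h2.trans h1)
      · exact Or.inl h1
      · exact Or.inl h2
      · exact Or.inr ⟨rfl, lexGT_trans _ _ _ h1 h2⟩

lemma lexGT_asymm {a b : List X} (h : lexGT a b) : ¬ lexGT b a :=
  fun h' => lexGT_irrefl a (lexGT_trans _ _ _ h h')

lemma lexGT_total : ∀ (a b : List X), a = b ∨ lexGT a b ∨ lexGT b a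
  | [], [] => Or.inl rfl
  | [], b :: bs => Or.inr (Or.inl ((lexGT_nil_iff _).mpr (by simp)))
  | a :: as, [] => Or.inr (Or.inr ((lexGT_nil_iff _).mpr (by simp)))
  | a :: as, b :: bs => by
      rcases lt_trichotomy a b with h | rfl | h
      · exact Or.inr (Or.inr (lexGT_cons_iff.mpr (Or.inl h)))
      · rcases lexGT_total as bs with rfl | h | h
        · exact Or.inl rfl
        · exact Or.inr (Or.inl (lexGT_cons_iff.mpr (Or.inr ⟨rfl, h⟩)))
        · exact Or.inr (Or.inr (lexGT_cons_iff.mpr (Or.inr ⟨rfl, h⟩)))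
      · exact Or.inr (Or.inl (lexGT_cons_iff.mpr (Or.inl h)))

/-- A proper prefix is `lexGT`-greater than the whole word. -/
lemma lexGT_self_append : ∀ (a x : List X), x ≠ [] → lexGT a (a ++ x)
  | [], x, hx => (lexGT_nil_iff _).mpr (by simpa using hx)
  | a :: as, x, hx => lexGT_cons_iff.mpr (Or.inr ⟨rfl, lexGT_self_append as x hx⟩)

lemma lexGT_append_left : ∀ (c a b : List X), lexGT a b → lexGT (c ++ a) (c ++ b)
  | [], _, _, h => h
  | x :: c, a, b, h => lexGT_cons_iff.mpr (Or.inr ⟨rfl, lexGT_append_left c a b h⟩)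

lemma lexGT_of_append_left : ∀ (c a b : List X), lexGT (c ++ a) (c ++ b) → lexGT a b
  | [], _, _, h => h
  | x :: c, a, b, h => by
      rcases lexGT_cons_iff.mp h with h | ⟨-, h⟩
      · exact absurd h (lt_irrefl x)
      · exact lexGT_of_append_left c a b h

lemma lexGT_append_of_length_eq :
    ∀ (a b x y : List X), lexGT a b → a.length = b.length → lexGT (a ++ x) (b ++ y)
  | [], [], _, _, h, _ => absurd h (lexGT_irrefl _)
  | [], b :: bs, _, _, _, hl => by simp at hl
  | a :: as, [], _, _, h, _ => absurd h (not_lexGT_nil _)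
  | a :: as, b :: bs, x, y, h, hl => by
      rcases lexGT_cons_iff.mp h with h | ⟨rfl, h2⟩
      · exact lexGT_cons_iff.mpr (Or.inl h)
      · exact lexGT_cons_iff.mpr
          (Or.inr ⟨rfl, lexGT_append_of_length_eq as bs x y h2 (by simpa using hl)⟩)

/-- If `a > b` and `a` is not a prefix of `b`, then appending to `a` keeps it greater. -/
lemma lexGT_append_of_not_prefix :
    ∀ (a b x : List X), lexGT a b → ¬ a <+: b → lexGT (a ++ x) b
  | [], b, x, _, hpre => absurd (List.nil_prefix) hpre
  | a :: as, [], x, h, _ => absurd h (not_lexGT_nil _)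
  | a :: as, b :: bs, x, h, hpre => by
      rcases lexGT_cons_iff.mp h with h | ⟨rfl, h2⟩
      · exact lexGT_cons_iff.mpr (Or.inl h)
      · exact lexGT_cons_iff.mpr (Or.inr ⟨rfl, lexGT_append_of_not_prefix as bs x h2
          (fun hp => hpre (List.cons_prefix_cons.mpr ⟨rfl, hp⟩))⟩)

/-- If `a > b` and `b` is not a prefix of `a`, then appending to `b` keeps `a` greater. -/
lemma lexGT_append_right_of_not_prefix :
    ∀ (a b x : List X), lexGT a b → ¬ b <+: a → lexGT a (b ++ x)
  | [], b, x, h, hpre => by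
      rw [lexGT_nil_iff] at h ⊢
      simp only [ne_eq, List.append_eq_nil_iff] at *
      tauto
  | a :: as, [], x, h, hpre => absurd List.nil_prefix hpre
  | a :: as, b :: bs, x, h, hpre => by
      rcases lexGT_cons_iff.mp h with h | ⟨rfl, h2⟩
      · exact lexGT_cons_iff.mpr (Or.inl h)
      · exact lexGT_cons_iff.mpr (Or.inr ⟨rfl, lexGT_append_right_of_not_prefix as bs x h2
          (fun hp => hpre (List.cons_prefix_cons.mpr ⟨rfl, hp⟩))⟩)

end LexLemmas

section ALSW
variable {X : Type*} [LinearOrder X]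

lemma suffix_length_lt {s w : List X} (h : s <:+ w) (hne : s ≠ w) : s.length < w.length :=
  lt_of_le_of_ne h.length_le (fun e => hne (h.eq_of_length e))

lemma suffix_of_suffix_le {s t w : List X} (h1 : t <:+ w) (h2 : s <:+ w)
    (h : t.length ≤ s.length) : t <:+ s := by
  rw [← List.reverse_prefix] at h1 h2 ⊢
  exact List.prefix_of_prefix_length_le h1 h2 (by simpa using h)

lemma suffix_append_right {s u : List X} (v : List X) (h : s <:+ u) : s ++ v <:+ u ++ v := by
  obtain ⟨c, rfl⟩ := h
  exact ⟨c, (List.append_assoc _ _ _).symm⟩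

/-- An ALSW is `lexGT`-greater than each of its proper nonempty suffixes. -/
lemma IsALSW.lexGT_suffix {w s : List X} (hw : IsALSW w) (hs : s <:+ w)
    (hne : s ≠ []) (hnw : s ≠ w) : lexGT w s := by
  obtain ⟨u, rfl⟩ := hs
  have hu : u ≠ [] := by rintro rfl; exact hnw rfl
  have hrot : lexGT (u ++ s) (s ++ u) := hw.2 u s hu hne rfl
  rcases lexGT_total (u ++ s) s with heq | h | h
  · exact absurd heq.symm hnw
  · exact h
  -- `s ⋗ w`; split on whether `s` is a prefix of `w`
  by_cases hpre : s <+: (u ++ s)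
  · obtain ⟨z, hz⟩ := hpre
    have hzne : z ≠ [] := by
      rintro rfl; simp at hz
      exact hnw (by simp [hz])
    have hrot2 : lexGT (u ++ s) (z ++ s) := by
      exact hw.2 s z hne hzne hz.symm
    have hlen : z.length = u.length := by
      have := congrArg List.length hz
      simp at this; omega
    have hzu : lexGT z u := by
      apply lexGT_of_append_left s
      have : lexGT (s ++ z) (s ++ u) := by rw [hz]; exact hrot
      exact this
    have : lexGT (z ++ s) (u ++ s) := lexGT_append_of_length_eq _ _ _ _ hzu hlen
    exact absurd hrot2 (lexGT_asymm this)
  · have := lexGT_append_of_not_prefix s (u ++ s) u h hpre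
    exact absurd hrot (lexGT_asymm this)

/-- Converse: a nonempty word greater than all its proper nonempty suffixes is an ALSW. -/
lemma isALSW_of_lexGT_suffix {w : List X} (hw : w ≠ [])
    (h : ∀ s, s <:+ w → s ≠ [] → s ≠ w → lexGT w s) : IsALSW w := by
  refine ⟨hw, fun u v hu hv hw' => ?_⟩
  subst hw'
  have hsuf : v <:+ u ++ v := ⟨u, rfl⟩
  have hnw : v ≠ u ++ v := by
    intro he
    have := congrArg List.length he
    simp at this
    exact hu this
  have hgt : lexGT (u ++ v) v := h v hsuf hv hnw
  have hpre : ¬ v <+: u ++ v := by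
    intro hp
    obtain ⟨z, hz⟩ := hp
    have hzne : z ≠ [] := by rintro rfl; simp at hz; exact hnw (by simp [hz])
    have : lexGT v (u ++ v) := by
      rw [← hz]; exact lexGT_self_append v z hzne
    exact lexGT_asymm this hgt
  exact lexGT_append_right_of_not_prefix _ _ u hgt hpre

end ALSW

section Factor
variable {X : Type*} [LinearOrder X] {u v : List X}

/-- If `v` is the longest proper ALSW suffix of the ALSW `u ++ v`, then `v` is
`lexGT`-greater than every other proper nonempty suffix. -/
lemma lexGT_longest_suffix (halsw : IsALSW (u ++ v)) (hv : IsALSW v)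
    (hmax : ∀ v' : List X, v' <:+ u ++ v → v' ≠ u ++ v → IsALSW v' → v'.length ≤ v.length) :
    ∀ t : List X, t <:+ u ++ v → t ≠ [] → t ≠ u ++ v → t ≠ v → lexGT v t := by
  suffices H : ∀ (n : ℕ) (t : List X), t.length ≤ n → t <:+ u ++ v → t ≠ [] → t ≠ u ++ v →
      t ≠ v → lexGT v t by
    exact fun t => H t.length t le_rfl
  intro n
  induction n with
  | zero =>
    intro t hlen _ hne _ _
    exact absurd (List.length_eq_zero_iff.mp (Nat.le_zero.mp hlen)) hne
  | succ n ih =>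
    intro t hlen hsuf hne hnw hnev
    by_cases hle : t.length ≤ v.length
    · exact hv.lexGT_suffix (suffix_of_suffix_le hsuf ⟨u, rfl⟩ hle) hne hnev
    · have htl : ¬ IsALSW t := fun h => hle (hmax t hsuf hnw h)
      have hex : ¬ ∀ s, s <:+ t → s ≠ [] → s ≠ t → lexGT t s :=
        fun h => htl (isALSW_of_lexGT_suffix hne h)
      push_neg at hex
      obtain ⟨s, hst, hsne, hsnt, hnlex⟩ := hex
      have hslt : lexGT s t := by
        rcases lexGT_total t s with e | h | h
        · exact absurd e.symm hsnt
        · exact absurd h hnlex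
        · exact h
      have hsw : s <:+ u ++ v := hst.trans hsuf
      have hltlen : s.length < t.length := suffix_length_lt hst hsnt
      have hwlen : t.length < (u ++ v).length := suffix_length_lt hsuf hnw
      rcases eq_or_ne s v with rfl | hsv
      · exact hslt
      · have hsnw : s ≠ u ++ v := by
          intro he; subst he; omega
        have := ih s (by omega) hsw hsne hsnw hsv
        exact lexGT_trans _ _ _ this hslt

/-- In the standard factorization of an ALSW, the left factor is an ALSW. -/
lemma isALSW_left_factor (halsw : IsALSW (u ++ v)) (hu : u ≠ []) (hv : IsALSW v)
    (hmax : ∀ v' : List X, v' <:+ u ++ v → v' ≠ u ++ v → IsALSW v' → v'.length ≤ v.length) :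
    IsALSW u := by
  apply isALSW_of_lexGT_suffix hu
  intro s hs hsne hsnu
  rcases lexGT_total u s with e | h | h
  · exact absurd e.symm hsnu
  · exact h
  exfalso
  have hslen : s.length < u.length := suffix_length_lt hs hsnu
  have hsvw : s ++ v <:+ u ++ v := suffix_append_right v hs
  have hsvne : s ++ v ≠ u ++ v := by
    intro he
    have := congrArg List.length he
    simp at this; omega
  have hgt : lexGT (u ++ v) (s ++ v) :=
    halsw.lexGT_suffix hsvw (by simp [hv.1]) hsvne
  by_cases hpre : s <+: u
  · obtain ⟨z, hz⟩ := hpre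
    have hzne : z ≠ [] := by
      rintro rfl
      simp at hz
      exact hsnu hz
    have hzlen : z.length < u.length := by
      have := congrArg List.length hz
      simp at this
      have : s.length ≠ 0 := by simpa using hsne
      omega
    have h1 : lexGT (z ++ v) v := by
      apply lexGT_of_append_left s
      rw [← List.append_assoc, hz]
      exact hgt
    have h2 : lexGT v (z ++ v) := by
      apply lexGT_longest_suffix halsw hv hmax
      · exact suffix_append_right v ⟨s, hz⟩
      · simp [hv.1]
      · intro he
        have : z = u := List.append_cancel_right he
        subst this; omega
      · intro he
        have : z ++ v = [] ++ v := by simpa using he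
        exact hzne (List.append_cancel_right this)
    exact lexGT_asymm h1 h2
  · have h1 : lexGT (s ++ v) u := lexGT_append_of_not_prefix s u v h hpre
    have h2 : lexGT u (u ++ v) := lexGT_self_append u v hv.1
    exact lexGT_asymm hgt (lexGT_trans _ _ _ h1 h2)

end Factor

section DegLex
variable {X : Type*} [LinearOrder X] {u v a b : List X}

lemma degLexGT_length_le (h : degLexGT u a) : a.length ≤ u.length := by
  rcases h with h | ⟨h, -⟩ <;> omega

lemma degLexGT_concat (halsw : IsALSW (u ++ v)) (hu : u ≠ [])
    (ha : a = u ∨ degLexGT u a) (hb : b = v ∨ degLexGT v b) (hne : a ++ b ≠ u ++ v) :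
    degLexGT (u ++ v) (a ++ b) := by
  have hla : a.length ≤ u.length := by
    rcases ha with rfl | h; exacts [le_rfl, degLexGT_length_le h]
  have hlb : b.length ≤ v.length := by
    rcases hb with rfl | h; exacts [le_rfl, degLexGT_length_le h]
  by_cases hlen : a.length = u.length ∧ b.length = v.length
  · right
    refine ⟨by simp [hlen.1, hlen.2], ?_⟩
    rcases ha with rfl | (h | ⟨-, h⟩)
    · rcases hb with rfl | (h | ⟨-, h⟩)
      · exact absurd rfl hne
      · omega
      · exact lexGT_append_left a v b h
    · omega
    · exact lexGT_append_of_length_eq u a v b h hlen.1.symm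
  · left; simp; omega

lemma degLexGT_concat' (halsw : IsALSW (u ++ v)) (hu : u ≠ []) (hv : v ≠ [])
    (ha : a = u ∨ degLexGT u a) (hb : b = v ∨ degLexGT v b) :
    degLexGT (u ++ v) (b ++ a) := by
  have base : lexGT (u ++ v) (v ++ u) := halsw.2 u v hu hv rfl
  have hla : a.length ≤ u.length := by
    rcases ha with rfl | h; exacts [le_rfl, degLexGT_length_le h]
  have hlb : b.length ≤ v.length := by
    rcases hb with rfl | h; exacts [le_rfl, degLexGT_length_le h]
  by_cases hlen : a.length = u.length ∧ b.length = v.length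
  · right
    refine ⟨by simp [hlen.1, hlen.2]; omega, ?_⟩
    rcases hb with rfl | (h | ⟨-, h⟩)
    · rcases ha with rfl | (h | ⟨-, h⟩)
      · exact base
      · omega
      · exact lexGT_trans _ _ _ base (lexGT_append_left b u a h)
    · omega
    · exact lexGT_trans _ _ _ base (lexGT_append_of_length_eq v b u a h hlen.2.symm)
  · left; simp; omega

end DegLex

section Algebra
open FreeMonoid MonoidAlgebra

variable {k : Type*} [Field k] {X : Type*} [LinearOrder X]

lemma degLexGT_irrefl (w : List X) : ¬ degLexGT w w := by
  rintro (h | ⟨-, h⟩)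
  · omega
  · exact lexGT_irrefl w h

lemma ofList_inj {a b : List X} (h : (ofList a : FreeMonoid X) = ofList b) : a = b :=
  FreeMonoid.ofList.injective h

/-- Decomposition of a nonzero coefficient of a product. -/
lemma exists_of_mul_coeff_ne_zero {F G : MonoidAlgebra k (FreeMonoid X)} {x : FreeMonoid X}
    (h : (F * G).coeff x ≠ 0) :
    ∃ a b : List X, F.coeff (ofList a) ≠ 0 ∧ G.coeff (ofList b) ≠ 0 ∧ x = ofList (a ++ b) := by
  classical
  have hx : x ∈ (F * G).coeff.support := Finsupp.mem_support_iff.mpr h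
  have hsub := MonoidAlgebra.support_coeff_mul_subset F G hx
  rw [Finset.mem_mul] at hsub
  obtain ⟨a, ha, b, hb, hab⟩ := hsub
  refine ⟨FreeMonoid.toList a, FreeMonoid.toList b, ?_, ?_, ?_⟩
  · simpa [FreeMonoid.ofList_toList] using Finsupp.mem_support_iff.mp ha
  · simpa [FreeMonoid.ofList_toList] using Finsupp.mem_support_iff.mp hb
  · rw [FreeMonoid.ofList_append]
    simp only [FreeMonoid.ofList_toList]
    exact hab.symm

lemma coeff_mul_eq_one {F G : MonoidAlgebra k (FreeMonoid X)} {u v : List X}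
    (hF1 : F.coeff (ofList u) = 1) (hF : ∀ a : List X, F.coeff (ofList a) ≠ 0 → a = u ∨ degLexGT u a)
    (hG1 : G.coeff (ofList v) = 1) (hG : ∀ b : List X, G.coeff (ofList b) ≠ 0 → b = v ∨ degLexGT v b) :
    (F * G).coeff (ofList (u ++ v)) = 1 := by
  classical
  set U : FreeMonoid X := ofList u with hU
  set V : FreeMonoid X := ofList v with hV
  set F₀ : MonoidAlgebra k (FreeMonoid X) := F - MonoidAlgebra.single U 1 with hF₀
  set G₀ : MonoidAlgebra k (FreeMonoid X) := G - MonoidAlgebra.single V 1 with hG₀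
  have hF₀spec : ∀ a : List X, F₀.coeff (ofList a) ≠ 0 → a ≠ u ∧ degLexGT u a := by
    intro a ha
    by_cases hau : a = u
    · exfalso; apply ha
      rw [hF₀, MonoidAlgebra.coeff_sub, Finsupp.sub_apply, hau, ← hU, hF1, MonoidAlgebra.coeff_single, Finsupp.single_eq_same]
      ring
    · have h0 : (MonoidAlgebra.single U (1 : k)).coeff (ofList a) = 0 :=
        Finsupp.single_eq_of_ne' (fun h => hau (ofList_inj h.symm))
      rw [hF₀, MonoidAlgebra.coeff_sub, Finsupp.sub_apply, h0, sub_zero] at ha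
      rcases hF a ha with rfl | h
      · exact absurd rfl hau
      · exact ⟨hau, h⟩
  have hG₀spec : ∀ b : List X, G₀.coeff (ofList b) ≠ 0 → b ≠ v ∧ degLexGT v b := by
    intro b hb
    by_cases hbv : b = v
    · exfalso; apply hb
      rw [hG₀, MonoidAlgebra.coeff_sub, Finsupp.sub_apply, hbv, ← hV, hG1, MonoidAlgebra.coeff_single, Finsupp.single_eq_same]
      ring
    · have h0 : (MonoidAlgebra.single V (1 : k)).coeff (ofList b) = 0 :=
        Finsupp.single_eq_of_ne' (fun h => hbv (ofList_inj h.symm))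
      rw [hG₀, MonoidAlgebra.coeff_sub, Finsupp.sub_apply, h0, sub_zero] at hb
      rcases hG b hb with rfl | h
      · exact absurd rfl hbv
      · exact ⟨hbv, h⟩
  have key : F * G = MonoidAlgebra.single U 1 * MonoidAlgebra.single V 1 +
      (MonoidAlgebra.single U 1 * G₀ + (F₀ * MonoidAlgebra.single V 1 + F₀ * G₀)) := by
    rw [hF₀, hG₀]; noncomm_ring
  have hUV : (ofList (u ++ v) : FreeMonoid X) = U * V := FreeMonoid.ofList_append u v
  have t1 : (MonoidAlgebra.single U (1 : k) * MonoidAlgebra.single V 1 : MonoidAlgebra k (FreeMonoid X)).coeff (ofList (u ++ v)) = 1 := by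
    rw [MonoidAlgebra.single_mul_single, hUV, MonoidAlgebra.coeff_single, Finsupp.single_eq_same]; exact one_mul 1
  have cancelL : ∀ a : FreeMonoid X, U * a = ofList (u ++ v) ↔ a = V := by
    intro a
    constructor
    · intro h
      have h2 : u ++ FreeMonoid.toList a = u ++ v := congrArg FreeMonoid.toList (h.trans hUV)
      have := List.append_cancel_left h2
      rw [← FreeMonoid.ofList_toList a, this]
    · rintro rfl; exact hUV.symm
  have cancelR : ∀ a : FreeMonoid X, a * V = ofList (u ++ v) ↔ a = U := by
    intro a
    constructor
    · intro h
      have h2 : FreeMonoid.toList a ++ v = u ++ v := congrArg FreeMonoid.toList (h.trans hUV)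
      have := List.append_cancel_right h2
      rw [← FreeMonoid.ofList_toList a, this]
    · rintro rfl; exact hUV.symm
  have t2 : (MonoidAlgebra.single U (1 : k) * G₀ : MonoidAlgebra k (FreeMonoid X)).coeff (ofList (u ++ v)) = 0 := by
    rw [MonoidAlgebra.coeff_single_mul_eq_mul_coeff (x := G₀) V (fun a _ => cancelL a)]
    have : G₀.coeff V = 0 := by
      rw [hG₀, MonoidAlgebra.coeff_sub, Finsupp.sub_apply, hG1, MonoidAlgebra.coeff_single, Finsupp.single_eq_same]; ring
    rw [this, mul_zero]
  have t3 : (F₀ * MonoidAlgebra.single V (1 : k) : MonoidAlgebra k (FreeMonoid X)).coeff (ofList (u ++ v)) = 0 := by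
    rw [MonoidAlgebra.coeff_mul_single_eq_coeff_mul (x := F₀) U (fun a _ => cancelR a)]
    have : F₀.coeff U = 0 := by
      rw [hF₀, MonoidAlgebra.coeff_sub, Finsupp.sub_apply, hF1, MonoidAlgebra.coeff_single, Finsupp.single_eq_same]; ring
    rw [this, zero_mul]
  have t4 : (F₀ * G₀).coeff (ofList (u ++ v)) = 0 := by
    by_contra h4
    obtain ⟨a, b, ha, hb, hab⟩ := exists_of_mul_coeff_ne_zero h4
    obtain ⟨hau, hadeg⟩ := hF₀spec a ha
    obtain ⟨hbv, hbdeg⟩ := hG₀spec b hb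
    have heq : u ++ v = a ++ b := ofList_inj hab
    have hla : a.length ≤ u.length := degLexGT_length_le hadeg
    have hlb : b.length ≤ v.length := degLexGT_length_le hbdeg
    have hlen : (u ++ v).length = (a ++ b).length := congrArg List.length heq
    simp only [List.length_append] at hlen
    have : a.length = u.length := by omega
    exact hau (List.append_inj heq.symm this).1
  rw [key]
  erw [MonoidAlgebra.coeff_add, MonoidAlgebra.coeff_add, MonoidAlgebra.coeff_add, Finsupp.add_apply, Finsupp.add_apply, Finsupp.add_apply]
  rw [t1, t2, t3, t4]
  ring

end Algebra

/-- The leading monomial (in the deg-lex order) of the standard bracketing `[w]`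
of an ALSW `w` is `w` itself, with coefficient `1`. -/
theorem lynBracket_leading_monomial (k : Type*) [Field k] {X : Type*} [LinearOrder X]
    (w : List X) (f : FreeAlgebra k X) (hw : IsALSW w) (hf : IsLynBracket k w f) :
    coeffOf k f w = 1 ∧
      ∀ w' : List X, w' ≠ w → coeffOf k f w' ≠ 0 → degLexGT w w' := by
  clear hw
  induction hf with
  | single a =>
    have he : (FreeAlgebra.equivMonoidAlgebraFreeMonoid (R := k) (X := X)) (FreeAlgebra.ι k a)
        = MonoidAlgebra.single (FreeMonoid.of a) 1 := by
      simp [FreeAlgebra.equivMonoidAlgebraFreeMonoid]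
    constructor
    · show ((FreeAlgebra.equivMonoidAlgebraFreeMonoid (R := k) (X := X)) (FreeAlgebra.ι k a)).coeff
        (FreeMonoid.ofList [a]) = 1
      rw [he]
      exact Finsupp.single_eq_same
    · intro w' hne hnz
      exfalso
      apply hnz
      show ((FreeAlgebra.equivMonoidAlgebraFreeMonoid (R := k) (X := X)) (FreeAlgebra.ι k a)).coeff
        (FreeMonoid.ofList w') = 0
      rw [he]
      exact Finsupp.single_eq_of_ne' (fun h => hne (ofList_inj h).symm)
  | node u v fu fv hfu hfv halsw hune hvalsw hmax ihu ihv =>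
    obtain ⟨hF1, hFle⟩ := ihu
    obtain ⟨hG1, hGle⟩ := ihv
    set e := FreeAlgebra.equivMonoidAlgebraFreeMonoid (R := k) (X := X) with he
    set F := e fu with hF
    set G := e fv with hG
    have hsub : ∀ x : List X, coeffOf k (fu * fv - fv * fu) x
        = (F * G).coeff (FreeMonoid.ofList x) - (G * F).coeff (FreeMonoid.ofList x) := by
      intro x
      show (e (fu * fv - fv * fu)).coeff (FreeMonoid.ofList x) = _
      rw [map_sub, map_mul, map_mul]
      rfl
    have hFspec : ∀ a : List X, F.coeff (FreeMonoid.ofList a) ≠ 0 → a = u ∨ degLexGT u a := by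
      intro a ha
      by_cases h : a = u
      · exact Or.inl h
      · exact Or.inr (hFle a h ha)
    have hGspec : ∀ b : List X, G.coeff (FreeMonoid.ofList b) ≠ 0 → b = v ∨ degLexGT v b := by
      intro b hb
      by_cases h : b = v
      · exact Or.inl h
      · exact Or.inr (hGle b h hb)
    constructor
    · rw [hsub]
      have h1 : (F * G).coeff (FreeMonoid.ofList (u ++ v)) = 1 :=
        coeff_mul_eq_one hF1 hFspec hG1 hGspec
      have h2 : (G * F).coeff (FreeMonoid.ofList (u ++ v)) = 0 := by
        by_contra h
        obtain ⟨b, a, hb, ha, hab⟩ := exists_of_mul_coeff_ne_zero h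
        have heq : u ++ v = b ++ a := ofList_inj hab
        have hdeg : degLexGT (u ++ v) (b ++ a) :=
          degLexGT_concat' halsw hune hvalsw.1 (hFspec a ha) (hGspec b hb)
        rw [← heq] at hdeg
        exact degLexGT_irrefl _ hdeg
      rw [h1, h2]; ring
    · intro w' hne hnz
      rw [hsub] at hnz
      have hor : (F * G).coeff (FreeMonoid.ofList w') ≠ 0 ∨ (G * F).coeff (FreeMonoid.ofList w') ≠ 0 := by
        by_contra hc
        push_neg at hc
        rw [hc.1, hc.2, sub_zero] at hnz
        exact hnz rfl
      rcases hor with h | h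
      · obtain ⟨a, b, ha, hb, hab⟩ := exists_of_mul_coeff_ne_zero h
        have heq : w' = a ++ b := ofList_inj hab
        rw [heq]
        exact degLexGT_concat halsw hune (hFspec a ha) (hGspec b hb) (heq ▸ hne)
      · obtain ⟨b, a, hb, ha, hab⟩ := exists_of_mul_coeff_ne_zero h
        have heq : w' = b ++ a := ofList_inj hab
        rw [heq]
        exact degLexGT_concat' halsw hune hvalsw.1 (hFspec a ha) (hGspec b hb)
end
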